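/- arXiv:1410.0268 — 5 statements merged into one kernel-verified Lean document; each statement's English description precedes it below -/
import Mathlib

section
/- Let u : ℝ^d → ℝ be continuous with u(y) ≤ C(1+|y|)^{s-δ} for some C > 0, δ > 0 and all y ∈ ℝ^d, and assume u is differentiable at x. If there exists y ∈ ℝ^d with u(x+y) < u(x) + y·∇u(x), then there exists an admissible kernel K such that the positive part of ũ_{x,∇u(x)}(y)K(y) has finite integral over ℝ^d while its negative part has infinite integral; consequently the infimum over all admissible kernels K of ∫_{ℝ^d} ũ_{x,∇u(x)}(y)K(y) dy equals -∞. -/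
open MeasureTheory Filter Metric Set
open scoped ENNReal NNReal Topology

noncomputable section

set_option maxHeartbeats 1000000

abbrev Ed (d : ℕ) := EuclideanSpace ℝ (Fin d)

/-- Admissible kernels: nonnegative measurable kernels whose distribution function
coincides with that of `|y|^{-d-s}`. -/
def admissibleKernel (d : ℕ) (s : ℝ) : Set (Ed d → ℝ≥0∞) :=
  {K | Measurable K ∧ ∀ r > (0 : ℝ),
    volume {y : Ed d | ENNReal.ofReal (r ^ (-(d : ℝ) - s)) < K y} = volume (ball (0 : Ed d) r)}

/-- `ũ_{x,b}(y) = u(x+y) - u(x) - b·y`. -/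
def utilde (d : ℕ) (u : Ed d → ℝ) (x b y : Ed d) : ℝ := u (x + y) - u x - (inner ℝ b y : ℝ)

/-- The subdifferential of `u` at `x`: slopes of global supporting planes. -/
def subdiff (d : ℕ) (u : Ed d → ℝ) (x : Ed d) : Set (Ed d) :=
  {b | ∀ z, u x + (inner ℝ b (z - x) : ℝ) ≤ u z}

/-- `∫ ũ_{x,b}(y) K(y) dy` (the integrand is nonnegative when `b ∈ ∂u(x)`). -/
def kernelInt (d : ℕ) (u : Ed d → ℝ) (x b : Ed d) (K : Ed d → ℝ≥0∞) : ℝ≥0∞ :=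
  ∫⁻ y, ENNReal.ofReal (utilde d u x b y) * K y

open Classical in
/-- The nonlocal Monge–Ampère operator, with values in `[-∞,+∞]`. -/
def MAop (d : ℕ) (s : ℝ) (u : Ed d → ℝ) (x : Ed d) : EReal :=
  if subdiff d u x = ∅ then ⊥
  else ⨆ b ∈ subdiff d u x, ((⨅ K ∈ admissibleKernel d s, kernelInt d u x b K : ℝ≥0∞) : EReal)

/-- The signed integral `∫ g(y) K(y) dy` as an extended real:
(integral of positive part) minus (integral of negative part). -/
def signedKernelInt (d : ℕ) (g : Ed d → ℝ) (K : Ed d → ℝ≥0∞) : EReal :=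
  ((∫⁻ y, ENNReal.ofReal (g y) * K y : ℝ≥0∞) : EReal)
    - ((∫⁻ y, ENNReal.ofReal (-g y) * K y : ℝ≥0∞) : EReal)

namespace StmtAux

lemma kernel_admissible (d : ℕ) (hd : 1 ≤ d) (s : ℝ) (hs : 0 < s) (y₀ : Ed d) :
    (fun y : Ed d => ENNReal.ofReal (‖y - y₀‖ ^ (-(d : ℝ) - s))) ∈ admissibleKernel d s := by
  have ha : (-(d:ℝ) - s) < 0 := by
    have : (0:ℝ) ≤ d := Nat.cast_nonneg d
    linarith
  haveI : Nonempty (Fin d) := Fin.pos_iff_nonempty.mp hd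
  haveI : Nontrivial (Ed d) := (WithLp.equiv 2 (Fin d → ℝ)).nontrivial
  constructor
  · have h1 : Measurable fun y : Ed d => ‖y - y₀‖ := (measurable_id.sub measurable_const).norm
    exact (h1.pow_const _).ennreal_ofReal
  · intro r hr
    have hset : {y : Ed d | ENNReal.ofReal (r ^ (-(d:ℝ) - s)) <
        ENNReal.ofReal (‖y - y₀‖ ^ (-(d:ℝ) - s))} = ball y₀ r \ {y₀} := by
      ext y
      by_cases hy : y = y₀
      · subst hy
        simp [Real.zero_rpow ha.ne]
      · have ht : 0 < ‖y - y₀‖ := by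
          rw [norm_pos_iff]; exact sub_ne_zero.mpr hy
        simp only [mem_setOf_eq, mem_diff, mem_ball, mem_singleton_iff, hy, not_false_iff,
          and_true]
        rw [ENNReal.ofReal_lt_ofReal_iff_of_nonneg (Real.rpow_nonneg hr.le _),
          Real.rpow_lt_rpow_iff_of_neg hr ht ha, dist_eq_norm]
    rw [hset, measure_diff_null (measure_singleton y₀), Measure.addHaar_ball_center _]

lemma neg_part_top (d : ℕ) (hd : 1 ≤ d) (s : ℝ) (hs : 0 < s) (g : Ed d → ℝ) (y₀ : Ed d)
    (c ε : ℝ) (hc : 0 < c) (hε : 0 < ε) (hlow : ∀ y ∈ ball y₀ ε, c ≤ -g y) :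
    ∫⁻ y, ENNReal.ofReal (-g y) * ENNReal.ofReal (‖y - y₀‖ ^ (-(d : ℝ) - s)) = ⊤ := by
  haveI : Nonempty (Fin d) := Fin.pos_iff_nonempty.mp hd
  haveI : Nontrivial (Ed d) := (WithLp.equiv 2 (Fin d → ℝ)).nontrivial
  set v₁ := volume (ball (0 : Ed d) 1) with hv₁
  have hv₁0 : v₁ ≠ 0 := (measure_ball_pos volume _ one_pos).ne'
  have hv₁top : v₁ ≠ ⊤ := measure_ball_lt_top.ne
  set I := ∫⁻ y, ENNReal.ofReal (-g y) * ENNReal.ofReal (‖y - y₀‖ ^ (-(d : ℝ) - s)) with hI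
  have key : ∀ r : ℝ, r ∈ Ioc (0:ℝ) ε → ENNReal.ofReal (c * r ^ (-s)) * v₁ ≤ I := by
    rintro r ⟨hr0, hrε⟩
    have hsub : ball y₀ r \ {y₀} ⊆ ball y₀ ε := fun y hy =>
      ball_subset_ball hrε hy.1
    have hmeas : MeasurableSet (ball y₀ r \ {y₀}) :=
      measurableSet_ball.diff (measurableSet_singleton _)
    have hpt : ∀ y ∈ ball y₀ r \ {y₀},
        ENNReal.ofReal c * ENNReal.ofReal (r ^ (-(d:ℝ) - s)) ≤
        ENNReal.ofReal (-g y) * ENNReal.ofReal (‖y - y₀‖ ^ (-(d : ℝ) - s)) := by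
      rintro y ⟨hy1, hy2⟩
      have ht : 0 < ‖y - y₀‖ := by
        rw [norm_pos_iff]; exact sub_ne_zero.mpr hy2
      have ha : (-(d:ℝ) - s) < 0 := by
        have : (0:ℝ) ≤ d := Nat.cast_nonneg d
        linarith
      refine mul_le_mul' (ENNReal.ofReal_le_ofReal (hlow y (hsub ⟨hy1, hy2⟩)))
        (ENNReal.ofReal_le_ofReal ?_)
      rw [Real.rpow_le_rpow_iff_of_neg hr0 ht ha]
      exact le_of_lt (by rwa [mem_ball, dist_eq_norm] at hy1)
    have h1 : ENNReal.ofReal c * ENNReal.ofReal (r ^ (-(d:ℝ) - s)) *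
        volume (ball y₀ r \ {y₀}) ≤ I := by
      calc ENNReal.ofReal c * ENNReal.ofReal (r ^ (-(d:ℝ) - s)) * volume (ball y₀ r \ {y₀})
          = ∫⁻ _ in ball y₀ r \ {y₀},
              ENNReal.ofReal c * ENNReal.ofReal (r ^ (-(d:ℝ) - s)) := by
            rw [setLIntegral_const]
        _ ≤ ∫⁻ y in ball y₀ r \ {y₀},
              ENNReal.ofReal (-g y) * ENNReal.ofReal (‖y - y₀‖ ^ (-(d : ℝ) - s)) :=
            setLIntegral_mono' hmeas hpt
        _ ≤ I := setLIntegral_le_lintegral _ _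
    have hvol : volume (ball y₀ r \ {y₀}) = ENNReal.ofReal (r ^ (d:ℕ)) * v₁ := by
      rw [measure_diff_null (measure_singleton y₀), Measure.addHaar_ball_of_pos _ _ hr0,
        finrank_euclideanSpace, Fintype.card_fin]
    rw [hvol, ← mul_assoc] at h1
    refine le_trans (le_of_eq ?_) h1
    congr 1
    rw [← ENNReal.ofReal_mul hc.le, ← ENNReal.ofReal_mul (by positivity), mul_assoc]
    congr 2
    rw [← Real.rpow_natCast r d, ← Real.rpow_add hr0]
    congr 1
    ring
  have hlim1 : Tendsto (fun r : ℝ => c * r ^ (-s)) (𝓝[>] 0) atTop := by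
    have h2 : Tendsto (fun r : ℝ => r ^ (-s)) (𝓝[>] 0) atTop := by
      have h3 : Tendsto (fun r : ℝ => r ^ s) (𝓝[>] 0) (𝓝[>] 0) := by
        apply tendsto_nhdsWithin_of_tendsto_nhds_of_eventually_within
        · have := (Real.continuousAt_rpow_const 0 s (Or.inr hs.le)).tendsto
          simpa [Real.zero_rpow hs.ne'] using this.mono_left nhdsWithin_le_nhds
        · filter_upwards [self_mem_nhdsWithin] with r (hr : 0 < r)
          exact Real.rpow_pos_of_pos hr s
      have := tendsto_inv_nhdsGT_zero.comp h3
      refine this.congr' ?_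
      filter_upwards [self_mem_nhdsWithin] with r (hr : 0 < r)
      simp [Function.comp, Real.rpow_neg hr.le]
    exact h2.const_mul_atTop hc
  have hlim2 : Tendsto (fun r : ℝ => ENNReal.ofReal (c * r ^ (-s)) * v₁) (𝓝[>] 0) (𝓝 ⊤) := by
    have := ENNReal.Tendsto.mul_const (ENNReal.tendsto_ofReal_atTop.comp hlim1)
      (Or.inr hv₁top)
    rwa [ENNReal.top_mul hv₁0] at this
  have htop : (⊤ : ℝ≥0∞) ≤ I := by
    refine le_of_tendsto hlim2 ?_
    filter_upwards [Ioc_mem_nhdsGT_of_mem ⟨le_refl (0:ℝ), hε⟩] with r hr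
    exact key r hr
  exact top_le_iff.mp htop

lemma pos_part_finite (d : ℕ) (s δ' A ε : ℝ) (hδ' : 0 < δ') (hp1 : 1 ≤ s - δ') (hA : 0 ≤ A)
    (hε : 0 < ε) (g : Ed d → ℝ) (y₀ : Ed d) (hball : ∀ y ∈ ball y₀ ε, g y ≤ 0)
    (hgrow : ∀ y, g y ≤ A * (1 + ‖y‖) ^ (s - δ')) :
    ∫⁻ y, ENNReal.ofReal (g y) * ENNReal.ofReal (‖y - y₀‖ ^ (-(d : ℝ) - s)) < ⊤ := by
  set p := s - δ' with hp
  have hp0 : 0 ≤ p := le_trans zero_le_one hp1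
  have hs0 : 0 < s := by linarith
  set M := A * (1 + ‖y₀‖) ^ p * (1 + 1/ε) ^ ((d:ℝ) + s) with hM
  have hM0 : 0 ≤ M := by positivity
  have ptwise : ∀ y : Ed d, ENNReal.ofReal (g y) * ENNReal.ofReal (‖y - y₀‖ ^ (-(d:ℝ) - s)) ≤
      ENNReal.ofReal M * ENNReal.ofReal ((1 + ‖y - y₀‖) ^ (-((d:ℝ) + δ'))) := by
    intro y
    by_cases hy : y ∈ ball y₀ ε
    · have : g y ≤ 0 := hball y hy
      rw [ENNReal.ofReal_eq_zero.mpr this, zero_mul]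
      exact zero_le
    · set t := ‖y - y₀‖ with htdef
      have htε : ε ≤ t := by
        rw [mem_ball, dist_eq_norm, not_lt] at hy
        exact hy
      have ht0 : 0 < t := lt_of_lt_of_le hε htε
      have h1 : (1 + ‖y‖) ^ p ≤ (1 + ‖y₀‖) ^ p * (1 + t) ^ p := by
        rw [← Real.mul_rpow (by positivity) (by positivity)]
        apply Real.rpow_le_rpow (by positivity) ?_ hp0
        have hn : ‖y‖ ≤ ‖y₀‖ + t := by
          calc ‖y‖ = ‖y₀ + (y - y₀)‖ := by rw [add_sub_cancel]
            _ ≤ ‖y₀‖ + t := norm_add_le _ _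
        nlinarith [norm_nonneg y₀, ht0.le]
      have h2 : t ^ (-(d:ℝ) - s) ≤ (1 + 1/ε) ^ ((d:ℝ) + s) * (1 + t) ^ (-((d:ℝ) + s)) := by
        have hds : (0:ℝ) ≤ (d:ℝ) + s := by positivity
        have hb : (1 + t) ≤ (1 + 1/ε) * t := by
          have h' : (1:ℝ) ≤ t / ε := (one_le_div hε).mpr htε
          rw [div_eq_mul_one_div] at h'
          nlinarith
        have hkey : (1 + t) ^ ((d:ℝ) + s) ≤ (1 + 1/ε) ^ ((d:ℝ) + s) * t ^ ((d:ℝ) + s) := by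
          rw [← Real.mul_rpow (by positivity) ht0.le]
          exact Real.rpow_le_rpow (by positivity) hb hds
        have e1 : t ^ (-(d:ℝ) - s) = (t ^ ((d:ℝ) + s))⁻¹ := by
          rw [← Real.rpow_neg ht0.le]; ring_nf
        have e2 : (1 + t) ^ (-((d:ℝ) + s)) = ((1 + t) ^ ((d:ℝ) + s))⁻¹ := by
          rw [← Real.rpow_neg (by positivity)]
        rw [e1, e2, ← one_div, ← div_eq_mul_inv,
          div_le_div_iff₀ (by positivity) (by positivity), one_mul]
        exact hkey
      have e3 : (1 + t) ^ p * (1 + t) ^ (-((d:ℝ) + s)) = (1 + t) ^ (-((d:ℝ) + δ')) := by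
        rw [← Real.rpow_add (by positivity)]
        congr 1
        rw [hp]; ring
      have hreal : A * (1 + ‖y‖) ^ p * t ^ (-(d:ℝ) - s) ≤ M * (1 + t) ^ (-((d:ℝ) + δ')) := by
        calc A * (1 + ‖y‖) ^ p * t ^ (-(d:ℝ) - s)
            ≤ A * ((1 + ‖y₀‖) ^ p * (1 + t) ^ p) *
              ((1 + 1/ε) ^ ((d:ℝ) + s) * (1 + t) ^ (-((d:ℝ) + s))) := by
              apply mul_le_mul (mul_le_mul_of_nonneg_left h1 hA) h2
                (Real.rpow_nonneg ht0.le _) (by positivity)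
          _ = (A * (1 + ‖y₀‖) ^ p * (1 + 1/ε) ^ ((d:ℝ) + s)) *
              ((1 + t) ^ p * (1 + t) ^ (-((d:ℝ) + s))) := by ring
          _ = M * (1 + t) ^ (-((d:ℝ) + δ')) := by rw [e3, hM]
      calc ENNReal.ofReal (g y) * ENNReal.ofReal (t ^ (-(d:ℝ) - s))
          ≤ ENNReal.ofReal (A * (1 + ‖y‖) ^ p) * ENNReal.ofReal (t ^ (-(d:ℝ) - s)) :=
            mul_le_mul' (ENNReal.ofReal_le_ofReal (hgrow y)) le_rfl
        _ = ENNReal.ofReal (A * (1 + ‖y‖) ^ p * t ^ (-(d:ℝ) - s)) :=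
            (ENNReal.ofReal_mul (by positivity)).symm
        _ ≤ ENNReal.ofReal (M * (1 + t) ^ (-((d:ℝ) + δ'))) := ENNReal.ofReal_le_ofReal hreal
        _ = ENNReal.ofReal M * ENNReal.ofReal ((1 + t) ^ (-((d:ℝ) + δ'))) :=
            ENNReal.ofReal_mul hM0
  calc ∫⁻ y, ENNReal.ofReal (g y) * ENNReal.ofReal (‖y - y₀‖ ^ (-(d : ℝ) - s))
      ≤ ∫⁻ y, ENNReal.ofReal M * ENNReal.ofReal ((1 + ‖y - y₀‖) ^ (-((d:ℝ) + δ'))) :=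
        lintegral_mono ptwise
    _ = ENNReal.ofReal M * ∫⁻ y, ENNReal.ofReal ((1 + ‖y - y₀‖) ^ (-((d:ℝ) + δ'))) :=
        lintegral_const_mul' _ _ ENNReal.ofReal_ne_top
    _ = ENNReal.ofReal M * ∫⁻ z, ENNReal.ofReal ((1 + ‖z‖) ^ (-((d:ℝ) + δ'))) := by
        congr 1
        have hsub : ∀ y : Ed d, y - y₀ = y + (-y₀) := fun y => sub_eq_add_neg y y₀
        simp_rw [hsub]
        exact lintegral_add_right_eq_self
          (fun z : Ed d => ENNReal.ofReal ((1 + ‖z‖) ^ (-((d:ℝ) + δ')))) (-y₀)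
    _ < ⊤ := by
        apply ENNReal.mul_lt_top ENNReal.ofReal_lt_top
        have hrank : (Module.finrank ℝ (Ed d) : ℝ) < (d:ℝ) + δ' := by
          rw [finrank_euclideanSpace, Fintype.card_fin]
          linarith
        exact finite_integral_one_add_norm hrank

end StmtAux

/-- If `u` grows slower than `|y|^{s-δ}` and fails to have a supporting plane at `x`
(i.e. `u(x+y) < u(x) + y·∇u(x)` for some `y`), then there is an admissible kernel for which
the positive part of `ũ_{x,∇u(x)} K` has finite integral while the negative part has infinite
integral; consequently the infimum over admissible kernels of `∫ ũ_{x,∇u(x)}(y) K(y) dy`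
is `-∞`. -/
theorem stmt1 (d : ℕ) (hd : 1 ≤ d) (s : ℝ) (hs : s ∈ Set.Ioo (1 : ℝ) 2)
    (u : Ed d → ℝ) (hu : Continuous u) (C δ : ℝ) (hC : 0 < C) (hδ : 0 < δ)
    (hgrowth : ∀ y : Ed d, u y ≤ C * (1 + ‖y‖) ^ (s - δ))
    (x : Ed d) (hdiff : DifferentiableAt ℝ u x)
    (hy : ∃ y : Ed d, u (x + y) < u x + (inner ℝ (gradient u x) y : ℝ)) :
    (∃ K ∈ admissibleKernel d s,
        (∫⁻ y, ENNReal.ofReal (utilde d u x (gradient u x) y) * K y) < ⊤ ∧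
        (∫⁻ y, ENNReal.ofReal (-(utilde d u x (gradient u x) y)) * K y) = ⊤) ∧
      (⨅ K ∈ admissibleKernel d s, signedKernelInt d (utilde d u x (gradient u x)) K)
        = (⊥ : EReal) := by
  obtain ⟨hs1, hs2⟩ := hs
  have hs0 : 0 < s := by linarith
  set b := gradient u x with hb
  set g := utilde d u x b with hg
  obtain ⟨y₀, hy₀⟩ := hy
  have hgy₀ : g y₀ < 0 := by
    simp only [hg, utilde]
    linarith
  -- continuity of g
  have hgc : Continuous g := by
    have h1 : Continuous fun y : Ed d => u (x + y) := hu.comp (continuous_const.add continuous_id)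
    have h2 : Continuous fun y : Ed d => (inner ℝ b y : ℝ) :=
      continuous_const.inner continuous_id
    exact (h1.sub continuous_const).sub h2
  -- small ball where g is very negative
  set c := -(g y₀) / 2 with hc
  have hc0 : 0 < c := by simp only [hc]; linarith
  have hU : IsOpen {y : Ed d | g y < -c} := isOpen_lt hgc continuous_const
  have hy₀U : y₀ ∈ {y : Ed d | g y < -c} := by
    simp only [mem_setOf_eq, hc]; linarith
  obtain ⟨ε, hε0, hεsub⟩ := Metric.isOpen_iff.mp hU y₀ hy₀U
  have hlow : ∀ y ∈ ball y₀ ε, c ≤ -g y := fun y hyb => by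
    have := hεsub hyb; simp only [mem_setOf_eq] at this; linarith
  have hball0 : ∀ y ∈ ball y₀ ε, g y ≤ 0 := fun y hyb => by
    have := hεsub hyb; simp only [mem_setOf_eq] at this; linarith
  -- growth bound for g
  set δ' := min δ (s - 1) with hδ'def
  have hδ'0 : 0 < δ' := lt_min hδ (by linarith)
  set p := s - δ' with hp
  have hp1 : 1 ≤ p := by
    have : δ' ≤ s - 1 := min_le_right _ _
    simp only [hp]; linarith
  have hp0 : 0 ≤ p := le_trans zero_le_one hp1
  set A := C * (1 + ‖x‖) ^ p + |u x| + ‖b‖ with hA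
  have hA0 : 0 ≤ A := by positivity
  have hgrow : ∀ y : Ed d, g y ≤ A * (1 + ‖y‖) ^ p := by
    intro y
    have hbase : (1:ℝ) ≤ 1 + ‖y‖ := by linarith [norm_nonneg y]
    have hone : (1:ℝ) ≤ (1 + ‖y‖) ^ p := Real.one_le_rpow hbase hp0
    have hnormy : ‖y‖ ≤ (1 + ‖y‖) ^ p := by
      calc ‖y‖ ≤ 1 + ‖y‖ := by linarith
        _ = (1 + ‖y‖) ^ (1:ℝ) := (Real.rpow_one _).symm
        _ ≤ (1 + ‖y‖) ^ p := Real.rpow_le_rpow_of_exponent_le hbase hp1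
    have hu1 : u (x + y) ≤ C * (1 + ‖x‖) ^ p * (1 + ‖y‖) ^ p := by
      have s1 : u (x + y) ≤ C * (1 + ‖x + y‖) ^ (s - δ) := hgrowth (x + y)
      have s2 : (1 + ‖x + y‖) ^ (s - δ) ≤ (1 + ‖x + y‖) ^ p := by
        apply Real.rpow_le_rpow_of_exponent_le (by linarith [norm_nonneg (x + y)])
        have : δ' ≤ δ := min_le_left _ _
        simp only [hp]; linarith
      have s3 : (1 + ‖x + y‖) ^ p ≤ ((1 + ‖x‖) * (1 + ‖y‖)) ^ p := by
        apply Real.rpow_le_rpow (by linarith [norm_nonneg (x + y)]) ?_ hp0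
        have := norm_add_le x y
        nlinarith [norm_nonneg x, norm_nonneg y]
      have s4 : ((1 + ‖x‖) * (1 + ‖y‖)) ^ p = (1 + ‖x‖) ^ p * (1 + ‖y‖) ^ p :=
        Real.mul_rpow (by linarith [norm_nonneg x]) (by linarith [norm_nonneg y])
      calc u (x + y) ≤ C * (1 + ‖x + y‖) ^ (s - δ) := s1
        _ ≤ C * ((1 + ‖x‖) ^ p * (1 + ‖y‖) ^ p) := by
            rw [← s4]
            exact mul_le_mul_of_nonneg_left (le_trans s2 s3) hC.le
        _ = C * (1 + ‖x‖) ^ p * (1 + ‖y‖) ^ p := by ring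
    have hinner : -(inner ℝ b y : ℝ) ≤ ‖b‖ * (1 + ‖y‖) ^ p := by
      have h5 : |(inner ℝ b y : ℝ)| ≤ ‖b‖ * ‖y‖ := abs_real_inner_le_norm b y
      have h6 : ‖b‖ * ‖y‖ ≤ ‖b‖ * (1 + ‖y‖) ^ p :=
        mul_le_mul_of_nonneg_left hnormy (norm_nonneg b)
      have := neg_abs_le (inner ℝ b y : ℝ)
      linarith
    have hux : -(u x) ≤ |u x| * (1 + ‖y‖) ^ p := by
      have h7 : |u x| ≤ |u x| * (1 + ‖y‖) ^ p := le_mul_of_one_le_right (abs_nonneg _) hone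
      have := neg_abs_le (u x)
      linarith
    have hexp : g y = u (x + y) - u x - (inner ℝ b y : ℝ) := rfl
    rw [hexp, hA]
    have expand : (C * (1 + ‖x‖) ^ p + |u x| + ‖b‖) * (1 + ‖y‖) ^ p =
        C * (1 + ‖x‖) ^ p * (1 + ‖y‖) ^ p + |u x| * (1 + ‖y‖) ^ p + ‖b‖ * (1 + ‖y‖) ^ p := by
      ring
    rw [expand]
    linarith
  -- the kernel
  set K : Ed d → ℝ≥0∞ := fun y => ENNReal.ofReal (‖y - y₀‖ ^ (-(d : ℝ) - s)) with hK
  have hKadm : K ∈ admissibleKernel d s := StmtAux.kernel_admissible d hd s hs0 y₀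
  have hpos : (∫⁻ y, ENNReal.ofReal (g y) * K y) < ⊤ :=
    StmtAux.pos_part_finite d s δ' A ε hδ'0 hp1 hA0 hε0 g y₀ hball0 hgrow
  have hneg : (∫⁻ y, ENNReal.ofReal (-(g y)) * K y) = ⊤ :=
    StmtAux.neg_part_top d hd s hs0 g y₀ c ε hc0 hε0 hlow
  refine ⟨⟨K, hKadm, hpos, hneg⟩, ?_⟩
  have hbot : signedKernelInt d g K = ⊥ := by
    unfold signedKernelInt
    rw [hneg, EReal.coe_ennreal_top, sub_eq_add_neg, EReal.neg_top, EReal.add_bot]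
  have hle : (⨅ K ∈ admissibleKernel d s, signedKernelInt d g K) ≤ ⊥ := by
    rw [← hbot]
    exact iInf₂_le K hKadm
  exact le_bot_iff.mp hle
end
end

section
/- Let u : ℝ^d → ℝ be continuous with u(y) ≤ C(1+|y|)^{s-δ} for some C > 0, δ > 0 and all y ∈ ℝ^d. Assume u is differentiable at x, that ∇u(x) ∈ ∂u(x) (i.e., u has a supporting plane at x), and that u is C^{1,1} at x, i.e., there exists C₁ > 0 with u(x+y) - u(x) - y·∇u(x) ≤ C₁|y|² for all |y| ≤ 1. Then MA u(x) is a finite nonnegative real number. -/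
open MeasureTheory Filter Metric Set
open scoped ENNReal NNReal Topology

noncomputable section

/-- Finiteness of `∫_{B_1} ‖y‖^a` for `-d < a < 0`. -/
lemma finite_lintegral_rpow_ball (d : ℕ) (hd : 1 ≤ d) {a : ℝ} (ha : -(d : ℝ) < a)
    (ha' : a < 0) :
    ∫⁻ y : Ed d in ball (0 : Ed d) 1, ENNReal.ofReal (‖y‖ ^ a) < ∞ := by
  haveI : Nonempty (Fin d) := Fin.pos_iff_nonempty.mp hd
  rw [lintegral_eq_lintegral_meas_le _ (ae_of_all _ fun y => Real.rpow_nonneg (norm_nonneg y) a)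
    (by fun_prop)]
  calc
    ∫⁻ t in Ioi 0, (volume.restrict (ball (0 : Ed d) 1)) {y : Ed d | t ≤ ‖y‖ ^ a}
      ≤ ∫⁻ t in Ioc 0 1 ∪ Ioi 1, (volume.restrict (ball (0 : Ed d) 1)) {y : Ed d | t ≤ ‖y‖ ^ a} :=
        lintegral_mono_set Ioi_subset_Ioc_union_Ioi
    _ ≤ (∫⁻ t in Ioc 0 1, (volume.restrict (ball (0 : Ed d) 1)) {y : Ed d | t ≤ ‖y‖ ^ a}) +
        ∫⁻ t in Ioi 1, (volume.restrict (ball (0 : Ed d) 1)) {y : Ed d | t ≤ ‖y‖ ^ a} :=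
        lintegral_union_le _ _ _
    _ < ∞ := by
      refine ENNReal.add_lt_top.2 ⟨?_, ?_⟩
      · calc
          ∫⁻ t in Ioc 0 1, (volume.restrict (ball (0 : Ed d) 1)) {y : Ed d | t ≤ ‖y‖ ^ a}
            ≤ ∫⁻ _ in Ioc (0:ℝ) 1, volume (ball (0 : Ed d) 1) := by
              refine setLIntegral_mono' measurableSet_Ioc fun t _ => ?_
              calc (volume.restrict (ball (0 : Ed d) 1)) {y : Ed d | t ≤ ‖y‖ ^ a}
                  ≤ (volume.restrict (ball (0 : Ed d) 1)) univ := measure_mono (subset_univ _)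
                _ = volume (ball (0 : Ed d) 1) := by
                    rw [Measure.restrict_apply_univ]
          _ = volume (ball (0 : Ed d) 1) * volume (Ioc (0:ℝ) 1) := by
              rw [setLIntegral_const]
          _ < ∞ := ENNReal.mul_lt_top measure_ball_lt_top (by simp)
      · have hda : (d : ℝ) * a⁻¹ < -1 := by
          have : (d : ℝ) / a < -1 := by
            rw [div_lt_iff_of_neg ha']
            linarith
          rwa [div_eq_mul_inv] at this
        calc
          ∫⁻ t in Ioi 1, (volume.restrict (ball (0 : Ed d) 1)) {y : Ed d | t ≤ ‖y‖ ^ a}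
            ≤ ∫⁻ t in Ioi 1, ENNReal.ofReal (t ^ ((d : ℝ) * a⁻¹)) * volume (ball (0 : Ed d) 1) := by
              refine setLIntegral_mono' measurableSet_Ioi fun t ht => ?_
              have ht1 : (1:ℝ) < t := ht
              have ht0 : (0:ℝ) < t := by linarith
              have hsub : {y : Ed d | t ≤ ‖y‖ ^ a} ⊆ closedBall (0 : Ed d) (t ^ a⁻¹) := by
                intro y hy
                have hy' : t ≤ ‖y‖ ^ a := hy
                have hy0 : y ≠ 0 := by
                  rintro rfl
                  rw [norm_zero, Real.zero_rpow ha'.ne] at hy'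
                  linarith
                have hn0 : (0:ℝ) < ‖y‖ := norm_pos_iff.mpr hy0
                have htpos : (0:ℝ) < t ^ a⁻¹ := Real.rpow_pos_of_pos ht0 _
                rw [mem_closedBall_zero_iff]
                rw [← Real.rpow_le_rpow_iff_of_neg htpos hn0 ha']
                calc (t ^ a⁻¹) ^ a = t ^ (a⁻¹ * a) := by rw [← Real.rpow_mul ht0.le]
                  _ = t := by rw [inv_mul_cancel₀ ha'.ne, Real.rpow_one]
                  _ ≤ ‖y‖ ^ a := hy'
              calc (volume.restrict (ball (0 : Ed d) 1)) {y : Ed d | t ≤ ‖y‖ ^ a}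
                  ≤ volume {y : Ed d | t ≤ ‖y‖ ^ a} := Measure.restrict_le_self _
                _ ≤ volume (closedBall (0 : Ed d) (t ^ a⁻¹)) := measure_mono hsub
                _ = ENNReal.ofReal ((t ^ a⁻¹) ^ Module.finrank ℝ (Ed d)) *
                      volume (ball (0 : Ed d) 1) :=
                    Measure.addHaar_closedBall _ _ (Real.rpow_nonneg ht0.le _)
                _ = ENNReal.ofReal (t ^ ((d : ℝ) * a⁻¹)) * volume (ball (0 : Ed d) 1) := by
                    rw [finrank_euclideanSpace_fin, ← Real.rpow_natCast (t ^ a⁻¹) d,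
                      ← Real.rpow_mul ht0.le, mul_comm a⁻¹]
          _ = (∫⁻ t in Ioi 1, ENNReal.ofReal (t ^ ((d : ℝ) * a⁻¹))) *
                volume (ball (0 : Ed d) 1) := by
              rw [lintegral_mul_const' _ _ measure_ball_lt_top.ne]
          _ < ∞ := ENNReal.mul_lt_top
              ((integrableOn_Ioi_rpow_of_lt hda one_pos).setLIntegral_lt_top)
              measure_ball_lt_top

/-- If `u` is differentiable at `x` and has a supporting plane at `x`, then the
subdifferential is exactly the singleton of the gradient. -/
lemma subdiff_eq_singleton (d : ℕ) (u : Ed d → ℝ) (x : Ed d)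
    (hdiff : DifferentiableAt ℝ u x) (hsupp : gradient u x ∈ subdiff d u x) :
    subdiff d u x = {gradient u x} := by
  refine Subset.antisymm ?_ (singleton_subset_iff.mpr hsupp)
  intro b hb
  set g := gradient u x with hg
  have hfd : HasFDerivAt u (InnerProductSpace.toDual ℝ (Ed d) g) x :=
    hdiff.hasGradientAt.hasFDerivAt
  have key : ∀ v : Ed d, (inner ℝ b v : ℝ) = inner ℝ g v := by
    intro v
    have hline : HasDerivAt (fun t : ℝ => x + t • v) v 0 := by
      simpa using ((hasDerivAt_id (0 : ℝ)).smul_const v).const_add x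
    have hφ : HasDerivAt (fun t : ℝ => u (x + t • v)) (inner ℝ g v : ℝ) 0 := by
      have hfd' : HasFDerivAt u (InnerProductSpace.toDual ℝ (Ed d) g)
          ((fun t : ℝ => x + t • v) 0) := by simpa using hfd
      have h3 := hfd'.comp_hasDerivAt 0 hline
      simp only [InnerProductSpace.toDual_apply_apply] at h3
      exact h3
    have hslope := hasDerivAt_iff_tendsto_slope.mp hφ
    have hval : ∀ t : ℝ, t ≠ 0 →
        slope (fun t : ℝ => u (x + t • v)) 0 t = (u (x + t • v) - u x) / t := by
      intro t ht
      rw [slope_def_field]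
      simp
    have hlb : ∀ t : ℝ, (inner ℝ b v : ℝ) * t ≤ u (x + t • v) - u x := by
      intro t
      have := hb (x + t • v)
      rw [add_sub_cancel_left, inner_smul_right] at this
      linarith [this]
    have hmono1 : 𝓝[>] (0:ℝ) ≤ 𝓝[≠] (0:ℝ) :=
      nhdsWithin_mono _ (fun t (ht : t ∈ Ioi (0:ℝ)) => ne_of_gt ht)
    have hmono2 : 𝓝[<] (0:ℝ) ≤ 𝓝[≠] (0:ℝ) :=
      nhdsWithin_mono _ (fun t (ht : t ∈ Iio (0:ℝ)) => ne_of_lt ht)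
    have h1 : (inner ℝ b v : ℝ) ≤ inner ℝ g v := by
      refine ge_of_tendsto (hslope.mono_left hmono1) ?_
      · filter_upwards [self_mem_nhdsWithin] with t ht
        have ht0 : (0:ℝ) < t := ht
        rw [hval t ht0.ne']
        rw [le_div_iff₀ ht0]
        exact hlb t
    have h2 : (inner ℝ g v : ℝ) ≤ inner ℝ b v := by
      refine le_of_tendsto (hslope.mono_left hmono2) ?_
      · filter_upwards [self_mem_nhdsWithin] with t ht
        have ht0 : t < (0:ℝ) := ht
        rw [hval t ht0.ne]
        rw [div_le_iff_of_neg ht0]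
        exact hlb t
    linarith
  have hz : (inner ℝ (b - g) (b - g) : ℝ) = 0 := by
    rw [inner_sub_left]
    have := key (b - g)
    linarith
  have : b - g = 0 := inner_self_eq_zero.mp hz
  simpa [mem_singleton_iff, sub_eq_zero] using this

/-- If `u` grows slower than `|y|^{s-δ}`, has a supporting plane at `x` with slope `∇u(x)`,
and is `C^{1,1}` at `x`, then `MA u(x)` is a finite nonnegative real number. -/
theorem stmt2 (d : ℕ) (hd : 1 ≤ d) (s : ℝ) (hs : s ∈ Set.Ioo (1 : ℝ) 2)
    (u : Ed d → ℝ) (hu : Continuous u) (C δ : ℝ) (hC : 0 < C) (hδ : 0 < δ)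
    (hgrowth : ∀ y : Ed d, u y ≤ C * (1 + ‖y‖) ^ (s - δ))
    (x : Ed d) (hdiff : DifferentiableAt ℝ u x)
    (hsupp : gradient u x ∈ subdiff d u x)
    (C₁ : ℝ) (hC₁ : 0 < C₁)
    (hC11 : ∀ y : Ed d, ‖y‖ ≤ 1 →
      u (x + y) - u x - (inner ℝ (gradient u x) y : ℝ) ≤ C₁ * ‖y‖ ^ 2) :
    ∃ m : ℝ, 0 ≤ m ∧ MAop d s u x = (m : EReal) := by
  obtain ⟨hs1, hs2⟩ := hs
  have hd1 : (1:ℝ) ≤ (d:ℝ) := by exact_mod_cast hd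
  haveI : Nonempty (Fin d) := Fin.pos_iff_nonempty.mp hd
  haveI : Nontrivial (Ed d) := by
    refine Module.nontrivial_of_finrank_pos (R := ℝ) ?_
    rw [finrank_euclideanSpace_fin]
    omega
  set g := gradient u x with hg
  have hsub : subdiff d u x = {g} := subdiff_eq_singleton d u x hdiff hsupp
  set e : ℝ := -(d:ℝ) - s with he
  have he0 : e < 0 := by rw [he]; linarith
  set K₀ : Ed d → ℝ≥0∞ := fun y => ENNReal.ofReal (‖y‖ ^ e) with hK₀def
  have hK₀adm : K₀ ∈ admissibleKernel d s := by
    refine ⟨by fun_prop, fun r hr => ?_⟩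
    have hset : {y : Ed d | ENNReal.ofReal (r ^ e) < K₀ y} = ball (0:Ed d) r \ {0} := by
      ext y
      simp only [hK₀def, mem_setOf_eq, mem_diff, mem_ball, dist_zero_right, mem_singleton_iff]
      rw [ENNReal.ofReal_lt_ofReal_iff_of_nonneg (Real.rpow_nonneg hr.le e)]
      constructor
      · intro h
        have hy0 : y ≠ 0 := by
          rintro rfl
          rw [norm_zero, Real.zero_rpow he0.ne] at h
          exact absurd h (not_lt.mpr (Real.rpow_nonneg hr.le e))
        exact ⟨(Real.rpow_lt_rpow_iff_of_neg hr (norm_pos_iff.mpr hy0) he0).mp h, hy0⟩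
      · rintro ⟨h1, h2⟩
        exact (Real.rpow_lt_rpow_iff_of_neg hr (norm_pos_iff.mpr h2) he0).mpr h1
    rw [hset, measure_diff_null (measure_singleton _)]
  have hg0 : ∀ y : Ed d, 0 ≤ utilde d u x g y := by
    intro y
    have h := hsupp (x + y)
    rw [add_sub_cancel_left] at h
    simp only [utilde]
    linarith
  set δ' : ℝ := min δ ((s - 1)/2) with hδ'def
  have hδ'0 : 0 < δ' := lt_min hδ (by linarith)
  have hδ'δ : δ' ≤ δ := min_le_left _ _
  have hδ's : δ' ≤ (s-1)/2 := min_le_right _ _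
  set p : ℝ := s - δ' with hpdef
  have hp1 : 1 ≤ p := by rw [hpdef]; linarith
  have hp0 : 0 < p := by linarith
  set A : ℝ := |u x| + ‖g‖ + C * (1 + ‖x‖) ^ p with hAdef
  have hA0 : 0 ≤ A := by
    have h1 : 0 ≤ C * (1+‖x‖)^p := by positivity
    have h2 : 0 ≤ |u x| := abs_nonneg _
    have h3 : 0 ≤ ‖g‖ := norm_nonneg _
    rw [hAdef]; linarith
  set M' : ℝ := A * 2 ^ ((d:ℝ) + s) with hM'def
  have hM'0 : 0 ≤ M' := by
    rw [hM'def]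
    positivity
  have master : ∀ y : Ed d, ENNReal.ofReal (utilde d u x g y) * K₀ y ≤
      (ball (0:Ed d) 1).indicator (fun y => ENNReal.ofReal (C₁ * ‖y‖ ^ ((2:ℝ) + e))) y
        + ENNReal.ofReal (M' * (1 + ‖y‖) ^ (-((d:ℝ) + δ'))) := by
    intro y
    simp only [hK₀def]
    rw [← ENNReal.ofReal_mul (hg0 y)]
    by_cases hy : y ∈ ball (0:Ed d) 1
    · rw [indicator_of_mem hy]
      refine le_trans (ENNReal.ofReal_le_ofReal ?_) (self_le_add_right _ _)
      rcases eq_or_ne y 0 with rfl | hy0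
      · rw [norm_zero, Real.zero_rpow he0.ne, mul_zero]
        positivity
      · have hylt : ‖y‖ < 1 := by rwa [mem_ball, dist_zero_right] at hy
        have hcc : utilde d u x g y ≤ C₁ * ‖y‖^2 := hC11 y hylt.le
        calc utilde d u x g y * ‖y‖ ^ e ≤ (C₁ * ‖y‖^2) * ‖y‖^e :=
              mul_le_mul_of_nonneg_right hcc (Real.rpow_nonneg (norm_nonneg y) e)
          _ = C₁ * ‖y‖ ^ ((2:ℝ)+e) := by
              rw [mul_assoc, ← Real.rpow_natCast ‖y‖ 2, ← Real.rpow_add (norm_pos_iff.mpr hy0)]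
              norm_num
    · rw [indicator_of_notMem hy, zero_add]
      have hy1 : 1 ≤ ‖y‖ := by
        rw [mem_ball, dist_zero_right, not_lt] at hy; exact hy
      refine ENNReal.ofReal_le_ofReal ?_
      set t : ℝ := (1 + ‖y‖) ^ p with htdef
      have hb1 : (0:ℝ) < 1 + ‖y‖ := by linarith
      have ht1 : 1 ≤ t := Real.one_le_rpow (by linarith) hp0.le
      have hyt : ‖y‖ ≤ t := by
        calc ‖y‖ ≤ 1 + ‖y‖ := by linarith
          _ = (1+‖y‖) ^ (1:ℝ) := (Real.rpow_one _).symm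
          _ ≤ t := Real.rpow_le_rpow_of_exponent_le (by linarith) hp1
      have hb2 : u (x + y) ≤ (C * (1+‖x‖)^p) * t := by
        calc u (x+y) ≤ C * (1+‖x+y‖)^(s-δ) := hgrowth (x+y)
          _ ≤ C * (1+‖x+y‖)^p := by
              refine mul_le_mul_of_nonneg_left ?_ hC.le
              exact Real.rpow_le_rpow_of_exponent_le (by linarith [norm_nonneg (x+y)])
                (by rw [hpdef]; linarith)
          _ ≤ C * ((1+‖x‖)*(1+‖y‖))^p := by
              refine mul_le_mul_of_nonneg_left
                (Real.rpow_le_rpow (by linarith [norm_nonneg (x+y)]) ?_ hp0.le) hC.le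
              have hna := norm_add_le x y
              nlinarith [norm_nonneg x, norm_nonneg y]
          _ = (C * (1+‖x‖)^p) * t := by
              rw [Real.mul_rpow (by linarith [norm_nonneg x]) hb1.le, htdef]; ring
      have hb3 : -(u x) ≤ |u x| * t :=
        le_trans (neg_le_abs _) (le_mul_of_one_le_right (abs_nonneg _) ht1)
      have hb4 : -(inner ℝ g y : ℝ) ≤ ‖g‖ * t := by
        have h1 : |(inner ℝ g y : ℝ)| ≤ ‖g‖ * ‖y‖ := abs_real_inner_le_norm g y
        have h2 : ‖g‖ * ‖y‖ ≤ ‖g‖ * t := mul_le_mul_of_nonneg_left hyt (norm_nonneg g)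
        have h3 := neg_abs_le (inner ℝ g y : ℝ)
        linarith
      have hAt : utilde d u x g y ≤ A * t := by
        have hexp : A * t = (C * (1+‖x‖)^p) * t + |u x| * t + ‖g‖ * t := by rw [hAdef]; ring
        simp only [utilde]
        linarith
      have hker : ‖y‖ ^ e ≤ ((1+‖y‖) ^ e) * 2 ^ ((d:ℝ)+s) := by
        have hstep : ‖y‖ ^ e ≤ ((1+‖y‖)/2) ^ e := by
          refine (Real.rpow_le_rpow_iff_of_neg (by positivity) (by linarith) he0).mpr ?_
          linarith
        calc ‖y‖ ^ e ≤ ((1+‖y‖)/2) ^ e := hstep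
          _ = (1+‖y‖)^e / 2^e := Real.div_rpow hb1.le (by norm_num : (0:ℝ) ≤ 2) e
          _ = (1+‖y‖)^e * 2^((d:ℝ)+s) := by
              rw [div_eq_mul_inv, ← Real.rpow_neg (by norm_num : (0:ℝ) ≤ 2)]
              congr 1
              rw [he]; ring
      have k0 : 0 ≤ ‖y‖ ^ e := Real.rpow_nonneg (norm_nonneg y) e
      have hAt0 : 0 ≤ A * t := mul_nonneg hA0 (by linarith)
      calc utilde d u x g y * ‖y‖^e ≤ (A*t) * ‖y‖^e := mul_le_mul_of_nonneg_right hAt k0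
        _ ≤ (A*t) * ((1+‖y‖)^e * 2^((d:ℝ)+s)) := mul_le_mul_of_nonneg_left hker hAt0
        _ = M' * ((1+‖y‖)^p * (1+‖y‖)^e) := by rw [hM'def, htdef]; ring
        _ = M' * (1+‖y‖)^(-((d:ℝ)+δ')) := by
            congr 1
            rw [← Real.rpow_add hb1]
            congr 1
            rw [hpdef, he]; ring
  have hfin : kernelInt d u x g K₀ < ⊤ := by
    rw [kernelInt]
    calc ∫⁻ y, ENNReal.ofReal (utilde d u x g y) * K₀ y
        ≤ ∫⁻ y, ((ball (0:Ed d) 1).indicator (fun y => ENNReal.ofReal (C₁ * ‖y‖ ^ ((2:ℝ)+e))) y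
            + ENNReal.ofReal (M' * (1+‖y‖) ^ (-((d:ℝ)+δ')))) := lintegral_mono master
      _ = (∫⁻ y, (ball (0:Ed d) 1).indicator
              (fun y => ENNReal.ofReal (C₁ * ‖y‖ ^ ((2:ℝ)+e))) y)
            + ∫⁻ y : Ed d, ENNReal.ofReal (M' * (1+‖y‖) ^ (-((d:ℝ)+δ'))) :=
          lintegral_add_left (Measurable.indicator (by fun_prop) measurableSet_ball) _
      _ < ⊤ := by
        refine ENNReal.add_lt_top.2 ⟨?_, ?_⟩
        · rw [lintegral_indicator measurableSet_ball]
          calc ∫⁻ y in ball (0:Ed d) 1, ENNReal.ofReal (C₁ * ‖y‖ ^ ((2:ℝ)+e))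
              = ∫⁻ y in ball (0:Ed d) 1,
                  ENNReal.ofReal C₁ * ENNReal.ofReal (‖y‖ ^ ((2:ℝ)+e)) := by
                simp_rw [ENNReal.ofReal_mul hC₁.le]
            _ = ENNReal.ofReal C₁ * ∫⁻ y in ball (0:Ed d) 1, ENNReal.ofReal (‖y‖ ^ ((2:ℝ)+e)) :=
                lintegral_const_mul' _ _ ENNReal.ofReal_ne_top
            _ < ⊤ := ENNReal.mul_lt_top ENNReal.ofReal_lt_top
                (finite_lintegral_rpow_ball d hd (by rw [he]; linarith) (by rw [he]; linarith))
        · calc ∫⁻ y : Ed d, ENNReal.ofReal (M' * (1+‖y‖) ^ (-((d:ℝ)+δ')))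
              = ENNReal.ofReal M' * ∫⁻ y : Ed d, ENNReal.ofReal ((1+‖y‖) ^ (-((d:ℝ)+δ'))) := by
                simp_rw [ENNReal.ofReal_mul hM'0]
                exact lintegral_const_mul' _ _ ENNReal.ofReal_ne_top
            _ < ⊤ := by
                refine ENNReal.mul_lt_top ENNReal.ofReal_lt_top ?_
                refine finite_integral_one_add_norm ?_
                rw [finrank_euclideanSpace_fin]
                linarith
  have hIne : (⨅ K ∈ admissibleKernel d s, kernelInt d u x g K) ≠ ⊤ :=
    ne_top_of_le_ne_top hfin.ne (iInf₂_le K₀ hK₀adm)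
  refine ⟨(⨅ K ∈ admissibleKernel d s, kernelInt d u x g K).toReal, ENNReal.toReal_nonneg, ?_⟩
  have hcoe : ((⨅ K ∈ admissibleKernel d s, kernelInt d u x g K : ℝ≥0∞) : EReal) =
      (((⨅ K ∈ admissibleKernel d s, kernelInt d u x g K).toReal : ℝ) : EReal) := by
    conv_lhs => rw [← ENNReal.ofReal_toReal hIne]
    rw [EReal.coe_ennreal_ofReal, max_eq_left ENNReal.toReal_nonneg]
  rw [MAop, if_neg (by rw [hsub]; exact Set.singleton_ne_empty g), hsub, iSup_singleton, hcoe]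
end
end

section
/- Let u : ℝ^d → ℝ, x ∈ ℝ^d and b ∈ ∂u(x), so that ũ_{x,b} ≥ 0. If the Lebesgue measure of {y : ũ_{x,b}(y) < λ} is infinite for every λ > 0, then the infimum over all admissible kernels K of ∫_{ℝ^d} ũ_{x,b}(y) K(y) dy equals zero. -/
open MeasureTheory Filter Metric Set
open scoped ENNReal NNReal Topology

noncomputable section

lemma mono_ivt (G : ℝ → ℝ≥0∞) (mono : Monotone G) (v : ℝ≥0∞)
    (hleft : ∀ x : ℝ, G x ≤ ⨆ n : ℕ, G (x - 1/(n+1)))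
    (hright : ∀ x : ℝ, (⨅ n : ℕ, G (x + 1/(n+1))) ≤ G x)
    (hlow : ∃ x, G x < v) (hhigh : ∃ x, v ≤ G x) :
    ∃ x₀ : ℝ, G x₀ = v ∧ {x | G x < v} = Iio x₀ := by
  obtain ⟨xl, hxl⟩ := hlow
  obtain ⟨xh, hxh⟩ := hhigh
  set X := {x | G x < v} with hX
  have hne : X.Nonempty := ⟨xl, hxl⟩
  have hbdd : BddAbove X := by
    refine ⟨xh, fun y hy => ?_⟩
    by_contra hcon
    push_neg at hcon
    exact absurd (hxh.trans (mono hcon.le)) (not_le.mpr hy)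
  set x₀ := sSup X with hx₀
  have hIio : Iio x₀ ⊆ X := by
    intro z hz
    obtain ⟨x', hx'X, hzx'⟩ := exists_lt_of_lt_csSup hne hz
    exact lt_of_le_of_lt (mono hzx'.le) hx'X
  have hge : v ≤ G x₀ := by
    refine le_trans (le_iInf fun n => ?_) (hright x₀)
    have hnot : x₀ + 1/(n+1) ∉ X := by
      intro hmem
      have := le_csSup hbdd hmem
      have hpos : (0:ℝ) < 1/(n+1) := by positivity
      linarith
    exact not_lt.mp hnot
  have hle : G x₀ ≤ v := by
    refine (hleft x₀).trans (iSup_le fun n => ?_)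
    refine le_of_lt (hIio ?_)
    have hpos : (0:ℝ) < 1/(n+1) := by positivity
    simp only [mem_Iio]; linarith
  have hGx₀ : G x₀ = v := le_antisymm hle hge
  refine ⟨x₀, hGx₀, Subset.antisymm ?_ hIio⟩
  intro x hx
  simp only [mem_Iio]
  by_contra hcon
  push_neg at hcon
  exact absurd (hGx₀ ▸ mono hcon) (not_le.mpr hx)


lemma hyperplane_null (d : ℕ) (hd : 1 ≤ d) (i : Fin d) (x : ℝ) :
    volume {z : Ed d | z i = x} = 0 := by
  haveI : Nonempty (Fin d) := ⟨⟨0, hd⟩⟩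
  have h1 : volume {z : Ed d | z i = 0} = 0 := by
    have he : {z : Ed d | z i = 0} =
        (LinearMap.ker ((EuclideanSpace.proj i : Ed d →L[ℝ] ℝ).toLinearMap) : Set (Ed d)) := by
      ext z; simp [LinearMap.mem_ker]
    rw [he]
    refine Measure.addHaar_submodule _ _ ?_
    intro h
    have h2 : (EuclideanSpace.single i (1:ℝ) : Ed d) ∈
        LinearMap.ker ((EuclideanSpace.proj i : Ed d →L[ℝ] ℝ).toLinearMap) := h ▸ trivial
    simp [LinearMap.mem_ker] at h2
  have he : {z : Ed d | z i = x} =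
      (fun z : Ed d => z + EuclideanSpace.single i (-x)) ⁻¹' {z : Ed d | z i = 0} := by
    ext z
    simp [PiLp.add_apply, EuclideanSpace.single_apply]
    constructor <;> intro h <;> linarith
  rw [he, measure_preimage_add_right]
  exact h1



lemma uniform_lemma (d : ℕ) (hd : 1 ≤ d) (T : Set (Ed d)) (hT : MeasurableSet T)
    (hfin : volume T ≠ ⊤) {cc : ℝ} (hc : 0 ≤ cc) (hcm : ENNReal.ofReal cc ≤ volume T) :
    volume {y : Ed d | y ∈ T ∧
      (volume (T ∩ (fun z : Ed d => z ⟨0, hd⟩) ⁻¹' Iio (y ⟨0, hd⟩))).toReal < cc}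
      = ENNReal.ofReal cc := by
  haveI : Nonempty (Fin d) := ⟨⟨0, hd⟩⟩
  set i0 : Fin d := ⟨0, hd⟩ with hi0
  set π : Ed d → ℝ := fun z => z i0 with hπ
  have hπm : Measurable π := by measurability
  set G : ℝ → ℝ≥0∞ := fun t => volume (T ∩ π ⁻¹' Iio t) with hG
  have hGfin : ∀ t, G t ≠ ⊤ := fun t => ne_top_of_le_ne_top hfin (measure_mono inter_subset_left)
  have hGmono : Monotone G := fun t₁ t₂ h =>
    measure_mono (inter_subset_inter_right _ (preimage_mono (Iio_subset_Iio h)))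
  have hset : ∀ t : ℝ, {y : Ed d | y ∈ T ∧ (G (π y)).toReal < t}
      = {y : Ed d | y ∈ T ∧ G (π y) < ENNReal.ofReal t} := by
    intro t
    ext y
    simp only [mem_setOf_eq, and_congr_right_iff]
    intro _
    exact (ENNReal.lt_ofReal_iff_toReal_lt (hGfin _)).symm
  rcases hc.eq_or_lt with hc0 | hc0
  · rw [← hc0]
    have : {y : Ed d | y ∈ T ∧ (G (π y)).toReal < 0} = ∅ := by
      ext y; simp only [mem_setOf_eq, mem_empty_iff_false, iff_false, not_and, not_lt]
      exact fun _ => ENNReal.toReal_nonneg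
    rw [this]; simp
  set v := ENNReal.ofReal cc with hv
  have hv0 : 0 < v := ENNReal.ofReal_pos.mpr hc0
  have hleft : ∀ t : ℝ, G t ≤ ⨆ n : ℕ, G (t - 1/(n+1)) := by
    intro t
    have hu : T ∩ π ⁻¹' Iio t = ⋃ n : ℕ, (T ∩ π ⁻¹' Iio (t - 1/(n+1))) := by
      ext y
      simp only [mem_inter_iff, mem_preimage, mem_Iio, mem_iUnion]
      constructor
      · rintro ⟨hyT, hyt⟩
        obtain ⟨n, hn⟩ := exists_nat_one_div_lt (sub_pos.mpr hyt)
        exact ⟨n, hyT, by push_cast at hn ⊢; linarith⟩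
      · rintro ⟨n, hyT, hyt⟩
        have : (0:ℝ) < 1/(n+1) := by positivity
        exact ⟨hyT, by linarith⟩
    have hmono : Monotone fun n : ℕ => T ∩ π ⁻¹' Iio (t - 1/(n+1)) := by
      intro n₁ n₂ h
      refine inter_subset_inter_right _ (preimage_mono (Iio_subset_Iio ?_))
      have h1 : (1:ℝ)/(n₂+1) ≤ 1/(n₁+1) := by
        apply one_div_le_one_div_of_le (by positivity)
        exact_mod_cast Nat.succ_le_succ h
      linarith
    have := hmono.measure_iUnion (μ := volume)
    rw [← hu] at this
    exact le_of_eq this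
  have hright : ∀ t : ℝ, (⨅ n : ℕ, G (t + 1/(n+1))) ≤ G t := by
    intro t
    have hanti : Antitone fun n : ℕ => T ∩ π ⁻¹' Iio (t + 1/(n+1)) := by
      intro n₁ n₂ h
      refine inter_subset_inter_right _ (preimage_mono (Iio_subset_Iio ?_))
      have h1 : (1:ℝ)/(n₂+1) ≤ 1/(n₁+1) := by
        apply one_div_le_one_div_of_le (by positivity)
        exact_mod_cast Nat.succ_le_succ h
      linarith
    have hinter : (⋂ n : ℕ, (T ∩ π ⁻¹' Iio (t + 1/(n+1)))) = T ∩ π ⁻¹' Iic t := by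
      ext y
      simp only [mem_iInter, mem_inter_iff, mem_preimage, mem_Iio, mem_Iic]
      constructor
      · intro h
        refine ⟨(h 0).1, ?_⟩
        by_contra hcon
        push_neg at hcon
        obtain ⟨n, hn⟩ := exists_nat_one_div_lt (sub_pos.mpr hcon)
        have := (h n).2
        push_cast at hn
        linarith
      · rintro ⟨hyT, hyt⟩ n
        have hp : (0:ℝ) < 1/(n+1) := by positivity
        exact ⟨hyT, by linarith⟩
    have h1 : (⨅ n : ℕ, G (t + 1/(n+1))) = volume (T ∩ π ⁻¹' Iic t) := by
      rw [← hinter]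
      exact (hanti.measure_iInter
        (fun n => ((hT.inter (hπm measurableSet_Iio)).nullMeasurableSet))
        ⟨0, hGfin _⟩).symm
    rw [h1]
    calc volume (T ∩ π ⁻¹' Iic t)
        ≤ volume ((T ∩ π ⁻¹' Iio t) ∪ {z : Ed d | z i0 = t}) := by
          apply measure_mono
          rintro y ⟨hyT, hyt⟩
          replace hyt : π y ≤ t := hyt
          rcases lt_or_eq_of_le hyt with h | h
          · exact Or.inl ⟨hyT, h⟩
          · exact Or.inr h
    _ ≤ volume (T ∩ π ⁻¹' Iio t) + volume {z : Ed d | z i0 = t} := measure_union_le _ _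
    _ = G t := by rw [hyperplane_null d hd i0 t, add_zero]
  have hlow : ∃ t, G t < v := by
    have hanti : Antitone fun n : ℕ => T ∩ π ⁻¹' Iio (-(n:ℝ)) := by
      intro n₁ n₂ h
      refine inter_subset_inter_right _ (preimage_mono (Iio_subset_Iio ?_))
      simp only [neg_le_neg_iff, Nat.cast_le]; exact h
    have hempty : (⋂ n : ℕ, (T ∩ π ⁻¹' Iio (-(n:ℝ)))) = ∅ := by
      ext y
      simp only [mem_iInter, mem_inter_iff, mem_preimage, mem_Iio, mem_empty_iff_false,
        iff_false, not_forall]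
      by_contra hcon
      push_neg at hcon
      obtain ⟨n, hn⟩ := exists_nat_gt (-(π y))
      exact absurd ((hcon n).2) (by simp only [not_lt]; linarith)
    have h0 := (hanti.measure_iInter
      (fun n => ((hT.inter (hπm measurableSet_Iio)).nullMeasurableSet)) ⟨0, hGfin _⟩)
    rw [hempty] at h0
    simp only [measure_empty] at h0
    by_contra hcon
    push_neg at hcon
    have : v ≤ ⨅ n : ℕ, G (-(n:ℝ)) := le_iInf fun n => hcon _
    rw [← h0] at this
    exact absurd (lt_of_lt_of_le hv0 this) (lt_irrefl _)
  have hTunion : volume T = ⨆ n : ℕ, G (n:ℝ) := by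
    have hu : T = ⋃ n : ℕ, (T ∩ π ⁻¹' Iio (n:ℝ)) := by
      ext y
      simp only [mem_iUnion, mem_inter_iff, mem_preimage, mem_Iio]
      constructor
      · intro hyT
        obtain ⟨n, hn⟩ := exists_nat_gt (π y)
        exact ⟨n, hyT, hn⟩
      · rintro ⟨n, hyT, _⟩; exact hyT
    have hmono : Monotone fun n : ℕ => T ∩ π ⁻¹' Iio (n:ℝ) := fun n₁ n₂ h =>
      inter_subset_inter_right _ (preimage_mono (Iio_subset_Iio (Nat.cast_le.mpr h)))
    conv_lhs => rw [hu]
    exact hmono.measure_iUnion (μ := volume)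
  by_cases hhigh : ∃ t, v ≤ G t
  · obtain ⟨x₀, hGx₀, hXeq⟩ := mono_ivt G hGmono v hleft hright hlow hhigh
    rw [hset]
    have heq : {y : Ed d | y ∈ T ∧ G (π y) < v} = T ∩ π ⁻¹' Iio x₀ := by
      ext y
      simp only [mem_setOf_eq, mem_inter_iff, mem_preimage, mem_Iio]
      constructor
      · rintro ⟨hyT, hyv⟩
        have hmem : π y ∈ {x | G x < v} := hyv
        rw [hXeq] at hmem
        exact ⟨hyT, hmem⟩
      · rintro ⟨hyT, hyx⟩
        have hmem : π y ∈ {x | G x < v} := by rw [hXeq]; exact hyx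
        exact ⟨hyT, hmem⟩
    rw [heq, ← hGx₀]
  · push_neg at hhigh
    rw [hset]
    have hTeq : {y : Ed d | y ∈ T ∧ G (π y) < v} = T := by
      ext y
      simp only [mem_setOf_eq, and_iff_left_iff_imp]
      exact fun _ => hhigh _
    rw [hTeq]
    refine le_antisymm ?_ hcm
    rw [hTunion]
    exact iSup_le fun n => (hhigh _).le

lemma exists_subset_of_infinite (d : ℕ) (hd : 1 ≤ d) (A : Set (Ed d)) (hA : MeasurableSet A)
    (hAinf : volume A = ⊤) {cc : ℝ} (hc : 0 ≤ cc) :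
    ∃ B, B ⊆ A ∧ MeasurableSet B ∧ volume B = ENNReal.ofReal cc := by
  haveI : Nonempty (Fin d) := ⟨⟨0, hd⟩⟩
  haveI : Nontrivial (Ed d) := inferInstance
  rcases hc.eq_or_lt with hc0 | hc0
  · exact ⟨∅, empty_subset _, MeasurableSet.empty, by simp [← hc0]⟩
  set G : ℝ → ℝ≥0∞ := fun R => volume (A ∩ ball (0 : Ed d) R) with hG
  have hGfin : ∀ R, G R ≠ ⊤ := fun R =>
    ne_top_of_le_ne_top (measure_ball_lt_top (x := (0:Ed d)) (r := R)).ne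
      (measure_mono inter_subset_right)
  have hGmono : Monotone G := fun R₁ R₂ h =>
    measure_mono (inter_subset_inter_right _ (ball_subset_ball h))
  set v := ENNReal.ofReal cc with hv
  have hv0 : 0 < v := ENNReal.ofReal_pos.mpr hc0
  have hleft : ∀ R : ℝ, G R ≤ ⨆ n : ℕ, G (R - 1/(n+1)) := by
    intro R
    have hu : A ∩ ball (0:Ed d) R = ⋃ n : ℕ, (A ∩ ball (0:Ed d) (R - 1/(n+1))) := by
      ext y
      simp only [mem_inter_iff, mem_ball, mem_iUnion]
      constructor
      · rintro ⟨hyA, hyR⟩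
        obtain ⟨n, hn⟩ := exists_nat_one_div_lt (sub_pos.mpr hyR)
        exact ⟨n, hyA, by linarith⟩
      · rintro ⟨n, hyA, hyR⟩
        have : (0:ℝ) < 1/(n+1) := by positivity
        exact ⟨hyA, by linarith⟩
    have hmono : Monotone fun n : ℕ => A ∩ ball (0:Ed d) (R - 1/(n+1)) := by
      intro n₁ n₂ h
      refine inter_subset_inter_right _ (ball_subset_ball ?_)
      have h1 : (1:ℝ)/(n₂+1) ≤ 1/(n₁+1) := by
        apply one_div_le_one_div_of_le (by positivity)
        exact_mod_cast Nat.succ_le_succ h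
      linarith
    have := hmono.measure_iUnion (μ := volume)
    rw [← hu] at this
    exact le_of_eq this
  have hright : ∀ R : ℝ, (⨅ n : ℕ, G (R + 1/(n+1))) ≤ G R := by
    intro R
    have hanti : Antitone fun n : ℕ => A ∩ ball (0:Ed d) (R + 1/(n+1)) := by
      intro n₁ n₂ h
      refine inter_subset_inter_right _ (ball_subset_ball ?_)
      have h1 : (1:ℝ)/(n₂+1) ≤ 1/(n₁+1) := by
        apply one_div_le_one_div_of_le (by positivity)
        exact_mod_cast Nat.succ_le_succ h
      linarith
    have hinter : (⋂ n : ℕ, (A ∩ ball (0:Ed d) (R + 1/(n+1)))) = A ∩ closedBall 0 R := by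
      ext y
      simp only [mem_iInter, mem_inter_iff, mem_ball, mem_closedBall]
      constructor
      · intro h
        refine ⟨(h 0).1, ?_⟩
        by_contra hcon
        push_neg at hcon
        obtain ⟨n, hn⟩ := exists_nat_one_div_lt (sub_pos.mpr hcon)
        have := (h n).2
        linarith
      · rintro ⟨hyA, hyR⟩ n
        have hp : (0:ℝ) < 1/(n+1) := by positivity
        exact ⟨hyA, by linarith⟩
    have h1 : (⨅ n : ℕ, G (R + 1/(n+1))) = volume (A ∩ closedBall (0:Ed d) R) := by
      rw [← hinter]
      exact (hanti.measure_iInter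
        (fun n => ((hA.inter measurableSet_ball).nullMeasurableSet)) ⟨0, hGfin _⟩).symm
    rw [h1]
    calc volume (A ∩ closedBall (0:Ed d) R)
        ≤ volume ((A ∩ ball (0:Ed d) R) ∪ sphere (0:Ed d) R) := by
          apply measure_mono
          rintro y ⟨hyA, hyR⟩
          replace hyR : dist y 0 ≤ R := hyR
          rcases lt_or_eq_of_le hyR with h | h
          · exact Or.inl ⟨hyA, h⟩
          · exact Or.inr h
    _ ≤ volume (A ∩ ball (0:Ed d) R) + volume (sphere (0:Ed d) R) := measure_union_le _ _
    _ = G R := by rw [Measure.addHaar_sphere, add_zero]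
  have hlow : ∃ R, G R < v := ⟨0, by simp only [hG, ball_zero, inter_empty, measure_empty]; exact hv0⟩
  have hhigh : ∃ R, v ≤ G R := by
    by_contra hcon
    push_neg at hcon
    have hu : A = ⋃ n : ℕ, (A ∩ ball (0:Ed d) n) := by
      ext y
      simp only [mem_iUnion, mem_inter_iff, mem_ball]
      constructor
      · intro hyA
        obtain ⟨n, hn⟩ := exists_nat_gt (dist y 0)
        exact ⟨n, hyA, hn⟩
      · rintro ⟨n, hyA, _⟩; exact hyA
    have hmono : Monotone fun n : ℕ => A ∩ ball (0:Ed d) n := fun n₁ n₂ h =>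
      inter_subset_inter_right _ (ball_subset_ball (Nat.cast_le.mpr h))
    have h2 : volume A = ⨆ n : ℕ, G (n:ℝ) := by
      conv_lhs => rw [hu]
      exact hmono.measure_iUnion (μ := volume)
    rw [hAinf] at h2
    have h3 : (⨆ n : ℕ, G (n:ℝ)) ≤ v := iSup_le fun n => (hcon _).le
    rw [← h2] at h3
    exact ENNReal.ofReal_ne_top (top_le_iff.mp h3)
  obtain ⟨x₀, hGx₀, _⟩ := mono_ivt G hGmono v hleft hright hlow hhigh
  exact ⟨A ∩ ball 0 x₀, inter_subset_left, hA.inter measurableSet_ball, hGx₀⟩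

lemma exists_disjoint_family (d : ℕ) (hd : 1 ≤ d) (H : ℤ → Set (Ed d))
    (hHm : ∀ n, MeasurableSet (H n)) (hHinf : ∀ n, volume (H n) = ⊤)
    (m : ℤ → ℝ) (hm0 : ∀ n, 0 ≤ m n) :
    ∃ T : ℤ → Set (Ed d), (∀ n, MeasurableSet (T n)) ∧ (∀ n, T n ⊆ H n) ∧
      (∀ n, volume (T n) = ENNReal.ofReal (m n)) ∧
      Pairwise (Function.onFun Disjoint T) := by
  set e : ℕ ≃ ℤ := (Denumerable.eqv ℤ).symm with he
  have key : ∀ (U : Set (Ed d)), MeasurableSet U → volume U ≠ ⊤ → ∀ k : ℕ,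
      ∃ B, B ⊆ H (e k) \ U ∧ MeasurableSet B ∧ volume B = ENNReal.ofReal (m (e k)) := by
    intro U hU hUf k
    refine exists_subset_of_infinite d hd _ ((hHm _).diff hU) ?_ (hm0 _)
    by_contra hcon
    have h1 : volume (H (e k)) ≤ volume (H (e k) \ U) + volume U := by
      refine le_trans (measure_mono ?_) (measure_union_le _ _)
      intro y hy
      by_cases hyU : y ∈ U
      · exact Or.inr hyU
      · exact Or.inl ⟨hy, hyU⟩
    rw [hHinf] at h1
    exact absurd (top_le_iff.mp h1) (by
      intro h2
      exact absurd h2 (ENNReal.add_ne_top.mpr ⟨hcon, hUf⟩))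
  -- the chain of accumulated unions
  let Chain : ℕ → {p : Set (Ed d) // MeasurableSet p ∧ volume p ≠ ⊤} := fun n =>
    Nat.rec ⟨∅, MeasurableSet.empty, by simp⟩
      (fun k ih => ⟨ih.1 ∪ (key ih.1 ih.2.1 ih.2.2 k).choose,
        ih.2.1.union (key ih.1 ih.2.1 ih.2.2 k).choose_spec.2.1,
        by
          refine ne_top_of_le_ne_top ?_ (measure_union_le ih.1 _)
          rw [(key ih.1 ih.2.1 ih.2.2 k).choose_spec.2.2]
          exact ENNReal.add_ne_top.mpr ⟨ih.2.2, ENNReal.ofReal_ne_top⟩⟩) n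
  let pick : ℕ → Set (Ed d) := fun k =>
    (key (Chain k).1 (Chain k).2.1 (Chain k).2.2 k).choose
  have hstep : ∀ k : ℕ, (Chain (k+1)).1 = (Chain k).1 ∪ pick k := fun k => rfl
  have hpick : ∀ k : ℕ, pick k ⊆ H (e k) \ (Chain k).1 ∧ MeasurableSet (pick k) ∧
      volume (pick k) = ENNReal.ofReal (m (e k)) := fun k =>
    (key (Chain k).1 (Chain k).2.1 (Chain k).2.2 k).choose_spec
  have hmono : ∀ j k : ℕ, j ≤ k → (Chain j).1 ⊆ (Chain k).1 := by
    intro j k hjk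
    induction k with
    | zero => simp_all
    | succ n ih =>
      rcases Nat.lt_or_ge j (n+1) with h | h
      · refine (ih (Nat.lt_succ_iff.mp h)).trans ?_
        rw [hstep]
        exact subset_union_left
      · have : j = n + 1 := le_antisymm hjk h
        subst this
        exact subset_rfl
  have hdisj : ∀ j k : ℕ, j < k → Disjoint (pick j) (pick k) := by
    intro j k hjk
    have h1 : pick j ⊆ (Chain k).1 := by
      refine subset_trans ?_ (hmono (j+1) k hjk)
      rw [hstep]
      exact subset_union_right
    have h2 : pick k ⊆ ((Chain k).1)ᶜ := fun y hy => ((hpick k).1 hy).2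
    exact disjoint_compl_right.mono h1 h2 |>.symm.symm
  refine ⟨fun n => pick (e.symm n), fun n => (hpick _).2.1, ?_, ?_, ?_⟩
  · intro n
    have := ((hpick (e.symm n)).1).trans diff_subset
    simpa using this
  · intro n
    have := (hpick (e.symm n)).2.2
    simpa using this
  · intro i j hij
    have hne : e.symm i ≠ e.symm j := fun h => hij (by simpa using congrArg e h)
    rcases Nat.lt_or_ge (e.symm i) (e.symm j) with h | h
    · exact hdisj _ _ h
    · exact (hdisj _ _ (lt_of_le_of_ne h (Ne.symm hne))).symm


lemma lint_bound {α : Type*} [MeasurableSpace α] (μ : Measure α) (T : ℤ → Set α)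
    (hTm : ∀ n, MeasurableSet (T n)) (hdisj : Pairwise (Function.onFun Disjoint T))
    (f : α → ℝ≥0∞) (M : ℤ → ℝ≥0∞) (hf0 : ∀ y, y ∉ ⋃ n, T n → f y = 0)
    (hbad : ∀ n, ∀ B, MeasurableSet B → B ⊆ {y | y ∈ T n ∧ M n < f y} → μ B = 0) :
    ∫⁻ y, f y ∂μ ≤ ∑' n, M n * μ (T n) := by
  rw [lintegral_def]
  refine iSup_le fun g => iSup_le fun hg => ?_
  rw [← g.lintegral_eq_lintegral μ]
  have hsupp : Function.support g ⊆ ⋃ n, T n := by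
    intro y hy
    by_contra hcon
    exact hy (le_antisymm ((hg y).trans (le_of_eq (hf0 y hcon))) zero_le)
  have h1 : ∫⁻ y, g y ∂μ = ∫⁻ y in ⋃ n, T n, g y ∂μ :=
    (setLIntegral_eq_of_support_subset hsupp).symm
  rw [h1, lintegral_iUnion hTm hdisj]
  refine ENNReal.tsum_le_tsum fun n => ?_
  have hae : ∀ᵐ y ∂μ.restrict (T n), g y ≤ M n := by
    rw [ae_restrict_iff' (hTm n)]
    have hB : μ (T n ∩ {y | M n < g y}) = 0 := by
      refine hbad n _ ((hTm n).inter (g.measurable measurableSet_Ioi)) ?_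
      rintro y ⟨hyT, hyg⟩
      exact ⟨hyT, lt_of_lt_of_le hyg (hg y)⟩
    have := measure_eq_zero_iff_ae_notMem.mp hB
    filter_upwards [this] with y hy hyT
    by_contra hcon
    exact hy ⟨hyT, not_le.mp hcon⟩
  calc ∫⁻ y in T n, g y ∂μ ≤ ∫⁻ _ in T n, M n ∂μ := lintegral_mono_ae hae
  _ = M n * μ (T n) := by rw [setLIntegral_const]


lemma tsum_weights : ∑' n : ℤ, (2⁻¹ : ℝ≥0∞) ^ n.natAbs = 3 := by
  have h1 : (fun n : ℤ => (2⁻¹ : ℝ≥0∞) ^ n.natAbs)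
      = fun n : ℤ => Int.rec (fun k : ℕ => (2⁻¹ : ℝ≥0∞) ^ k)
          (fun k : ℕ => (2⁻¹ : ℝ≥0∞) ^ (k+1)) n := by
    funext n
    cases n <;> rfl
  rw [h1, tsum_int_rec ENNReal.summable ENNReal.summable]
  have hg : ∑' k : ℕ, (2⁻¹ : ℝ≥0∞) ^ k = 2 := by
    rw [ENNReal.tsum_geometric]
    have : (1 : ℝ≥0∞) - 2⁻¹ = 2⁻¹ := by
      rw [← ENNReal.inv_two_add_inv_two, ENNReal.add_sub_cancel_right (by simp)]
    rw [this, inv_inv]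
  have hg2 : ∑' k : ℕ, (2⁻¹ : ℝ≥0∞) ^ (k+1) = 1 := by
    have : ∀ k : ℕ, (2⁻¹ : ℝ≥0∞) ^ (k+1) = (2⁻¹ : ℝ≥0∞) ^ k * 2⁻¹ := fun k => pow_succ _ _
    simp_rw [this]
    rw [ENNReal.tsum_mul_right, hg]
    rw [ENNReal.mul_inv_cancel (by norm_num) (by norm_num)]
  rw [hg, hg2]
  norm_num

lemma Ioc_inter_Ioc (p q' a : ℝ) (h0 : 0 < p) (hpq : p ≤ q') :
    Ioc p q' ∩ Ioc 0 a = Ioc (min a p) (min a q') := by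
  ext z
  simp only [mem_inter_iff, mem_Ioc, min_lt_iff, le_min_iff]
  constructor
  · rintro ⟨⟨hpz, hzq⟩, h0z, hza⟩
    exact ⟨Or.inr hpz, hza, hzq⟩
  · rintro ⟨hlt, hza, hzq⟩
    rcases hlt with h | h
    · linarith
    · exact ⟨⟨h, hzq⟩, by linarith, hza⟩



lemma pi_coord_measurable (d : ℕ) (hd : 1 ≤ d) : Measurable fun z : Ed d => z ⟨0, hd⟩ := by
  measurability


/-- If every sublevel set `{ũ_{x,b} < λ}`, `λ > 0`, has infinite measure, then the infimum
over all admissible kernels `K` of `∫ ũ_{x,b}(y) K(y) dy` equals zero. -/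
theorem stmt3 (d : ℕ) (hd : 1 ≤ d) (s : ℝ) (hs : s ∈ Set.Ioo (1 : ℝ) 2)
    (u : Ed d → ℝ) (x b : Ed d) (hb : b ∈ subdiff d u x)
    (hinf : ∀ lam : ℝ, 0 < lam → volume {y : Ed d | utilde d u x b y < lam} = ⊤) :
    (⨅ K ∈ admissibleKernel d s, kernelInt d u x b K) = 0 := by
  haveI : Nonempty (Fin d) := ⟨⟨0, hd⟩⟩
  haveI : Nontrivial (Ed d) := inferInstance
  have hd0 : (0:ℝ) < d := by exact_mod_cast hd
  have hs0 : 0 < s := lt_trans one_pos hs.1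
  refine le_antisymm ?_ zero_le
  refine ENNReal.le_of_forall_pos_le_add fun ε hε _ => ?_
  rw [zero_add]
  -- constants
  set c : ℝ := (volume (ball (0 : Ed d) 1)).toReal with hcdef
  have hcball : volume (ball (0 : Ed d) 1) ≠ ⊤ := measure_ball_lt_top.ne
  have hc : 0 < c := ENNReal.toReal_pos (measure_ball_pos volume 0 one_pos).ne' hcball
  have hball : ∀ r : ℝ, 0 < r →
      volume (ball (0 : Ed d) r) = ENNReal.ofReal (r ^ (d:ℕ) * c) := by
    intro r hr
    rw [Measure.addHaar_ball _ _ hr.le, finrank_euclideanSpace, Fintype.card_fin,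
      ENNReal.ofReal_mul (by positivity), ENNReal.ofReal_toReal hcball]
  set q : ℝ := ((d:ℝ) + s) / d with hqdef
  have hq : 0 < q := by positivity
  have hdq : (d:ℝ) * q = (d:ℝ) + s := by rw [hqdef]; field_simp
  set e3 : ℝ := (ε:ℝ) / 3 with he3def
  have he3 : 0 < e3 := by positivity
  set pw : ℤ → ℝ := fun n => (2:ℝ) ^ n with hpwdef
  have hpw : ∀ n, 0 < pw n := fun n => zpow_pos two_pos n
  set lam : ℤ → ℝ := fun n => e3 * (2⁻¹:ℝ) ^ n.natAbs * (pw n / c) ^ q / pw n with hlamdef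
  have hlam : ∀ n, 0 < lam n := by
    intro n
    have h1 : (0:ℝ) < (pw n / c) ^ q := Real.rpow_pos_of_pos (by positivity) _
    have h2 : (0:ℝ) < (2⁻¹:ℝ) ^ n.natAbs := by positivity
    have := hpw n
    simp only [hlamdef]
    positivity
  set S : ℤ → Set (Ed d) := fun n => {y | utilde d u x b y < lam n} with hSdef
  have hSvol : ∀ n, volume (S n) = ⊤ := fun n => hinf _ (hlam n)
  set H : ℤ → Set (Ed d) := fun n => toMeasurable volume (S n) with hHdef
  have hHm : ∀ n, MeasurableSet (H n) := fun n => measurableSet_toMeasurable _ _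
  have hHinf : ∀ n, volume (H n) = ⊤ := fun n => (measure_toMeasurable (S n)).trans (hSvol n)
  have hull : ∀ n, ∀ B : Set (Ed d), MeasurableSet B → B ⊆ H n \ S n → volume B = 0 := by
    intro n B hB hBsub
    have h1 : volume (toMeasurable volume (S n) ∩ B) = volume (S n ∩ B) :=
      Measure.measure_toMeasurable_inter_of_sFinite hB _
    have h2 : S n ∩ B = ∅ := by
      ext y
      simp only [mem_inter_iff, mem_empty_iff_false, iff_false, not_and]
      intro hyS hyB
      exact (hBsub hyB).2 hyS
    have h3 : toMeasurable volume (S n) ∩ B = B := by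
      apply inter_eq_self_of_subset_right
      exact fun y hy => (hBsub hy).1
    rw [h3, h2] at h1
    simpa using h1
  obtain ⟨T, hTm, hTsub, hTvol, hTdisj⟩ :=
    exists_disjoint_family d hd H hHm hHinf pw (fun n => (hpw n).le)
  have hTfin : ∀ n, volume (T n) ≠ ⊤ := fun n => by
    rw [hTvol n]; exact ENNReal.ofReal_ne_top
  -- the uniformization functions
  set w : ℤ → Ed d → ℝ := fun n y =>
    (volume (T n ∩ (fun z : Ed d => z ⟨0, hd⟩) ⁻¹' Iio (y ⟨0, hd⟩))).toReal with hwdef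
  have hw0 : ∀ n y, 0 ≤ w n y := fun n y => ENNReal.toReal_nonneg
  have hwle : ∀ n y, w n y ≤ pw n := by
    intro n y
    have h1 : volume (T n ∩ (fun z : Ed d => z ⟨0, hd⟩) ⁻¹' Iio (y ⟨0, hd⟩)) ≤ volume (T n) :=
      measure_mono inter_subset_left
    rw [hTvol n] at h1
    calc w n y ≤ (ENNReal.ofReal (pw n)).toReal := ENNReal.toReal_mono ENNReal.ofReal_ne_top h1
    _ = pw n := ENNReal.toReal_ofReal (hpw n).le
  have hwm : ∀ n, Measurable (w n) := by
    intro n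
    have hFm : Measurable fun t : ℝ =>
        volume (T n ∩ (fun z : Ed d => z ⟨0, hd⟩) ⁻¹' Iio t) := by
      apply Monotone.measurable
      intro t₁ t₂ h
      exact measure_mono (inter_subset_inter_right _ (preimage_mono (Iio_subset_Iio h)))
    exact ENNReal.measurable_toReal.comp (hFm.comp (pi_coord_measurable d hd))
  set v : ℤ → Ed d → ℝ := fun n y => pw n + w n y with hvdef
  have hvm : ∀ n, Measurable (v n) := fun n => (hwm n).const_add (pw n)
  have hv1 : ∀ n y, pw n ≤ v n y := fun n y => le_add_of_nonneg_right (hw0 n y)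
  have hv2 : ∀ n y, v n y ≤ 2 * pw n := fun n y => by
    have := hwle n y; simp only [hvdef]; linarith
  have hvc : ∀ n y, 0 < v n y / c := fun n y => by
    have := (hpw n).trans_le (hv1 n y); positivity
  set K : Ed d → ℝ≥0∞ := fun y =>
    ∑' n : ℤ, (T n).indicator (fun y' => ENNReal.ofReal ((v n y' / c) ^ (-q))) y with hKdef
  have hKm : Measurable K := by
    apply Measurable.ennreal_tsum
    intro n
    refine Measurable.indicator ?_ (hTm n)
    have heq : (fun y' => ENNReal.ofReal ((v n y' / c) ^ (-q)))
        = fun y' => ENNReal.ofReal (((v n y' / c) ^ q)⁻¹) := by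
      funext y'
      rw [Real.rpow_neg (hvc n y').le]
    rw [heq]
    exact ENNReal.measurable_ofReal.comp
      (((Real.continuous_rpow_const hq.le).measurable.comp ((hvm n).div_const c)).inv)
  have hKy : ∀ n y, y ∈ T n → K y = ENNReal.ofReal ((v n y / c) ^ (-q)) := by
    intro n y hy
    show (∑' m : ℤ, (T m).indicator (fun y' => ENNReal.ofReal ((v m y' / c) ^ (-q))) y)
      = ENNReal.ofReal ((v n y / c) ^ (-q))
    rw [tsum_eq_single n]
    · exact indicator_of_mem hy _
    · intro m hm
      apply indicator_of_notMem
      intro hym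
      exact (Set.disjoint_left.mp (hTdisj hm) hym) hy
  have hK0 : ∀ y, y ∉ ⋃ n, T n → K y = 0 := by
    intro y hy
    show (∑' m : ℤ, (T m).indicator (fun y' => ENNReal.ofReal ((v m y' / c) ^ (-q))) y) = 0
    rw [ENNReal.tsum_eq_zero]
    intro n
    apply indicator_of_notMem
    exact fun hyn => hy (mem_iUnion.mpr ⟨n, hyn⟩)
  -- admissibility
  have hadm : K ∈ admissibleKernel d s := by
    refine ⟨hKm, fun r hr => ?_⟩
    set a : ℝ := r ^ (d:ℕ) * c with hadef
    have ha : 0 < a := by positivity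
    have hrs : r ^ (-(d:ℝ) - s) = (a / c) ^ (-q) := by
      have h1 : a / c = r ^ ((d:ℝ)) := by
        rw [hadef, mul_div_assoc, div_self hc.ne', mul_one, Real.rpow_natCast]
      rw [h1, ← Real.rpow_mul hr.le]
      congr 1
      rw [mul_neg, hdq]
      ring
    have hlevel : {y : Ed d | ENNReal.ofReal (r ^ (-(d:ℝ) - s)) < K y}
        = ⋃ n, (T n ∩ {y | v n y < a}) := by
      ext y
      by_cases hy : ∃ n, y ∈ T n
      · obtain ⟨n₀, hn₀⟩ := hy
        simp only [mem_setOf_eq, mem_iUnion, mem_inter_iff]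
        rw [hKy n₀ y hn₀, hrs]
        have hac : 0 < a / c := by positivity
        have hiff : ENNReal.ofReal ((a / c) ^ (-q)) <
            ENNReal.ofReal ((v n₀ y / c) ^ (-q)) ↔ v n₀ y < a := by
          rw [ENNReal.ofReal_lt_ofReal_iff (Real.rpow_pos_of_pos (hvc n₀ y) _)]
          rw [Real.rpow_lt_rpow_iff_of_neg hac (hvc n₀ y) (neg_lt_zero.mpr hq)]
          exact div_lt_div_iff_of_pos_right hc
        rw [hiff]
        constructor
        · intro h
          exact ⟨n₀, hn₀, h⟩
        · rintro ⟨n, hn, hlt⟩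
          have : n = n₀ := by
            by_contra hne
            exact (Set.disjoint_left.mp (hTdisj hne) hn) hn₀
          subst this
          exact hlt
      · push_neg at hy
        simp only [mem_setOf_eq, mem_iUnion, mem_inter_iff]
        rw [hK0 y (fun hc' => by obtain ⟨n, hn⟩ := mem_iUnion.mp hc'; exact hy n hn)]
        simp only [not_lt_zero', false_iff, not_exists, not_and]
        intro n hn
        exact absurd hn (hy n)
    rw [hlevel]
    have hBm : ∀ n, MeasurableSet (T n ∩ {y | v n y < a}) := fun n =>
      (hTm n).inter ((hvm n) measurableSet_Iio)
    have hBdisj : Pairwise (Function.onFun Disjoint fun n => T n ∩ {y | v n y < a}) :=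
      fun i j hij => (hTdisj hij).mono inter_subset_left inter_subset_left
    rw [measure_iUnion hBdisj hBm]
    have hblock : ∀ n, volume (T n ∩ {y | v n y < a})
        = ENNReal.ofReal (min a (2 * pw n) - min a (pw n)) := by
      intro n
      rcases le_or_gt a (pw n) with h1 | h1
      · have hempty : T n ∩ {y | v n y < a} = ∅ := by
          ext y
          simp only [mem_inter_iff, mem_setOf_eq, mem_empty_iff_false, iff_false, not_and, not_lt]
          exact fun _ => h1.trans (hv1 n y)
        rw [hempty]
        have h2 : min a (2 * pw n) = a := min_eq_left (by have := hpw n; linarith)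
        have h3 : min a (pw n) = a := min_eq_left h1
        rw [h2, h3]
        simp
      · rcases le_or_gt a (2 * pw n) with h2 | h2
        · have hseteq : T n ∩ {y | v n y < a} = {y : Ed d | y ∈ T n ∧
              (volume (T n ∩ (fun z : Ed d => z ⟨0, hd⟩) ⁻¹' Iio (y ⟨0, hd⟩))).toReal
                < a - pw n} := by
            ext y
            simp only [mem_inter_iff, mem_setOf_eq, hvdef]
            constructor
            · rintro ⟨hyT, hyv⟩
              refine ⟨hyT, ?_⟩
              have hw : w n y < a - pw n := by linarith
              exact hw
            · rintro ⟨hyT, hyw⟩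
              refine ⟨hyT, ?_⟩
              have hw : w n y < a - pw n := hyw
              linarith
          rw [hseteq, uniform_lemma d hd (T n) (hTm n) (hTfin n) (by linarith)
            (by rw [hTvol n]; exact ENNReal.ofReal_le_ofReal (by linarith))]
          rw [min_eq_left h2, min_eq_right h1.le]
        · have hfull : T n ∩ {y | v n y < a} = T n := by
            apply inter_eq_self_of_subset_left
            intro y hy
            simp only [mem_setOf_eq]
            exact lt_of_le_of_lt (hv2 n y) h2
          rw [hfull, hTvol n]
          rw [min_eq_right h2.le, min_eq_right h1.le]
          congr 1
          ring
    have hsum : (∑' n : ℤ, volume (T n ∩ {y | v n y < a})) = ENNReal.ofReal a := by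
      have hterm : ∀ n : ℤ, volume (T n ∩ {y | v n y < a})
          = volume (Ioc ((2:ℝ)^n) ((2:ℝ)^(n+1)) ∩ Ioc 0 a) := by
        intro n
        have hp1 : (2:ℝ)^(n+1) = 2 * pw n := by
          simp only [hpwdef]
          rw [zpow_add_one₀ (two_ne_zero)]
          ring
        rw [hblock n, hp1, Ioc_inter_Ioc _ _ _ (hpw n) (by have := hpw n; linarith),
          Real.volume_Ioc]
      simp_rw [hterm]
      have hpd : ∀ i j : ℤ, i < j →
          Disjoint (Ioc ((2:ℝ)^i) ((2:ℝ)^(i+1))) (Ioc ((2:ℝ)^j) ((2:ℝ)^(j+1))) := by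
        intro i j hij
        refine disjoint_left.mpr fun z hz1 hz2 => ?_
        have hle : (2:ℝ)^(i+1) ≤ (2:ℝ)^j := zpow_le_zpow_right₀ one_le_two (by omega)
        have h1 := hz1.2
        have h2 := hz2.1
        linarith [hz1.2, hz2.1]
      have hdisjI : Pairwise (Function.onFun Disjoint
          fun n : ℤ => Ioc ((2:ℝ)^n) ((2:ℝ)^(n+1)) ∩ Ioc 0 a) := by
        intro i j hij
        rcases lt_or_gt_of_ne hij with h | h
        · exact (hpd i j h).mono inter_subset_left inter_subset_left
        · exact ((hpd j i h).symm).mono inter_subset_left inter_subset_left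
      rw [← measure_iUnion hdisjI (fun n => (measurableSet_Ioc.inter measurableSet_Ioc))]
      have hun : (⋃ n : ℤ, (Ioc ((2:ℝ)^n) ((2:ℝ)^(n+1)) ∩ Ioc 0 a)) = Ioc 0 a := by
        apply Subset.antisymm
        · exact iUnion_subset fun n => inter_subset_right
        · intro z hz
          obtain ⟨n, hn⟩ := exists_mem_Ioc_zpow hz.1 (one_lt_two (α := ℝ))
          exact mem_iUnion.mpr ⟨n, hn, hz⟩
      rw [hun, Real.volume_Ioc, sub_zero]
    rw [hsum, hball r hr]
  -- the integral bound
  have hbound : kernelInt d u x b K ≤ (ε : ℝ≥0∞) := by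
    set M : ℤ → ℝ≥0∞ := fun n => ENNReal.ofReal (lam n * (pw n / c) ^ (-q)) with hMdef
    have h1 : kernelInt d u x b K ≤ ∑' n : ℤ, M n * volume (T n) := by
      refine lint_bound volume T hTm hTdisj _ M ?_ ?_
      · intro y hy
        rw [hK0 y hy, mul_zero]
      · intro n B hB hBsub
        apply hull n B hB
        intro y hyB
        obtain ⟨hyT, hyM⟩ := hBsub hyB
        refine ⟨hTsub n hyT, ?_⟩
        intro hyS
        have hKle : K y ≤ ENNReal.ofReal ((pw n / c) ^ (-q)) := by
          rw [hKy n y hyT]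
          apply ENNReal.ofReal_le_ofReal
          have hpc : 0 < pw n / c := by have := hpw n; positivity
          rw [Real.rpow_le_rpow_iff_of_neg (hvc n y) hpc (neg_lt_zero.mpr hq)]
          exact (div_le_div_iff_of_pos_right hc).mpr (hv1 n y)
        have hfle : ENNReal.ofReal (utilde d u x b y) * K y ≤ M n := by
          have hut : utilde d u x b y < lam n := hyS
          calc ENNReal.ofReal (utilde d u x b y) * K y
              ≤ ENNReal.ofReal (lam n) * ENNReal.ofReal ((pw n / c) ^ (-q)) :=
                mul_le_mul' (ENNReal.ofReal_le_ofReal hut.le) hKle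
          _ = M n := (ENNReal.ofReal_mul (hlam n).le).symm
        exact absurd hyM (not_lt.mpr hfle)
    have h2 : (∑' n : ℤ, M n * volume (T n)) = (ε : ℝ≥0∞) := by
      have hterm : ∀ n : ℤ, M n * volume (T n)
          = ENNReal.ofReal e3 * (2⁻¹ : ℝ≥0∞) ^ n.natAbs := by
        intro n
        have hpc : (0:ℝ) < pw n / c := by have := hpw n; positivity
        have hcancel : (pw n / c) ^ q * (pw n / c) ^ (-q) = 1 := by
          rw [← Real.rpow_add hpc]
          simp
        have hre : lam n * (pw n / c) ^ (-q) * pw n = e3 * (2⁻¹:ℝ) ^ n.natAbs := by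
          have hstep : lam n * (pw n / c) ^ (-q) * pw n
              = e3 * (2⁻¹:ℝ) ^ n.natAbs * ((pw n / c) ^ q * (pw n / c) ^ (-q))
                * (pw n / pw n) := by
            simp only [hlamdef]
            ring
          rw [hstep, hcancel, div_self (hpw n).ne']
          ring
        rw [hMdef, hTvol n, ← ENNReal.ofReal_mul (by positivity), hre,
          ENNReal.ofReal_mul he3.le, ENNReal.ofReal_pow (by norm_num)]
        congr 2
        rw [ENNReal.ofReal_inv_of_pos two_pos, ENNReal.ofReal_ofNat]
      simp_rw [hterm]
      rw [ENNReal.tsum_mul_left, tsum_weights]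
      rw [show (3:ℝ≥0∞) = ENNReal.ofReal 3 by norm_num [ENNReal.ofReal_ofNat]]
      rw [← ENNReal.ofReal_mul he3.le]
      rw [show e3 * 3 = (ε:ℝ) by rw [he3def]; ring]
      exact ENNReal.ofReal_coe_nnreal
    rw [← h2]
    exact h1
  calc (⨅ K ∈ admissibleKernel d s, kernelInt d u x b K) ≤ kernelInt d u x b K :=
        iInf₂_le K hadm
  _ ≤ (ε : ℝ≥0∞) := hbound
end
end

section
/- Let u, v : ℝ^d → ℝ be continuous functions and x ∈ ℝ^d, and assume MA u(x) > -∞ and MA v(x) > -∞ (so both lie in [0,∞]). Then MA((u+v)/2)(x) ≥ (MA u(x) + MA v(x))/2, with the arithmetic of [0,∞]. -/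
open MeasureTheory Filter Metric Set
open scoped ENNReal NNReal Topology

noncomputable section

/-- coercion ℝ≥0∞ → EReal preserves nonempty suprema -/
lemma coe_ennreal_iSup' {ι : Sort*} [Nonempty ι] (f : ι → ℝ≥0∞) :
    ((⨆ i, f i : ℝ≥0∞) : EReal) = ⨆ i, (f i : EReal) :=
  Monotone.map_ciSup_of_continuousAt continuous_coe_ennreal_ereal.continuousAt
    (fun _ _ h => EReal.coe_ennreal_le_coe_ennreal_iff.2 h)

lemma MAop_eq (d : ℕ) (s : ℝ) (u : Ed d → ℝ) (x : Ed d) (h : (subdiff d u x).Nonempty) :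
    MAop d s u x = ((⨆ b ∈ subdiff d u x, ⨅ K ∈ admissibleKernel d s,
      kernelInt d u x b K : ℝ≥0∞) : EReal) := by
  have : Nonempty (subdiff d u x) := h.to_subtype
  rw [MAop, if_neg h.ne_empty, iSup_subtype', iSup_subtype' (p := fun b => b ∈ subdiff d u x),
    coe_ennreal_iSup']

/-- Concavity of the nonlocal Monge–Ampère operator:
`MA((u+v)/2)(x) ≥ (MA u(x) + MA v(x))/2` whenever both values are `> -∞`. -/
theorem stmt8 (d : ℕ) (hd : 1 ≤ d) (s : ℝ) (hs : s ∈ Set.Ioo (1 : ℝ) 2)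
    (u v : Ed d → ℝ) (hu : Continuous u) (hv : Continuous v) (x : Ed d)
    (hMu : MAop d s u x ≠ ⊥) (hMv : MAop d s v x ≠ ⊥) :
    (MAop d s u x + MAop d s v x) * (((1 : ℝ) / 2 : ℝ) : EReal)
      ≤ MAop d s (fun y => (u y + v y) / 2) x := by

  classical
  set w : Ed d → ℝ := fun y => (u y + v y) / 2 with hw
  have hSu : (subdiff d u x).Nonempty := by
    by_contra h
    exact hMu (by rw [MAop, if_pos (Set.not_nonempty_iff_eq_empty.1 h)])
  have hSv : (subdiff d v x).Nonempty := by
    by_contra h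
    exact hMv (by rw [MAop, if_pos (Set.not_nonempty_iff_eq_empty.1 h)])
  -- midpoint of subgradients is a subgradient of w
  have hmid : ∀ b1 ∈ subdiff d u x, ∀ b2 ∈ subdiff d v x,
      (2 : ℝ)⁻¹ • (b1 + b2) ∈ subdiff d w x := by
    intro b1 h1 b2 h2 z
    have e : (inner ℝ ((2:ℝ)⁻¹ • (b1 + b2)) (z - x) : ℝ)
        = ((inner ℝ b1 (z-x) : ℝ) + (inner ℝ b2 (z-x) : ℝ)) / 2 := by
      rw [real_inner_smul_left, inner_add_left]; ring
    have := add_le_add (h1 z) (h2 z)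
    simp only [hw, e]
    linarith
  have hSw : (subdiff d w x).Nonempty := by
    obtain ⟨b1, h1⟩ := hSu; obtain ⟨b2, h2⟩ := hSv
    exact ⟨_, hmid b1 h1 b2 h2⟩
  -- nonnegativity of utilde for subgradients
  have hnn : ∀ (f : Ed d → ℝ) (b : Ed d), b ∈ subdiff d f x → ∀ y, 0 ≤ utilde d f x b y := by
    intro f b hb y
    have := hb (x + y)
    simp only [add_sub_cancel_left] at this
    simp only [utilde]; linarith
  -- the key pointwise identity
  have hut : ∀ b1 b2 y, utilde d w x ((2:ℝ)⁻¹ • (b1 + b2)) y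
      = (utilde d u x b1 y + utilde d v x b2 y) / 2 := by
    intro b1 b2 y
    simp only [utilde, hw, real_inner_smul_left, inner_add_left]
    ring
  -- kernel integrals
  have hker : ∀ b1 ∈ subdiff d u x, ∀ b2 ∈ subdiff d v x, ∀ K : Ed d → ℝ≥0∞, Measurable K →
      kernelInt d w x ((2:ℝ)⁻¹ • (b1 + b2)) K
        = 2⁻¹ * (kernelInt d u x b1 K + kernelInt d v x b2 K) := by
    intro b1 h1 b2 h2 K hK
    have hmeas : Measurable fun y => ENNReal.ofReal (utilde d u x b1 y) * K y := by
      apply Measurable.mul _ hK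
      have hc : Continuous (utilde d u x b1) := by
        unfold utilde
        exact ((hu.comp (continuous_const.add continuous_id)).sub continuous_const).sub
          (continuous_const.inner continuous_id)
      exact ENNReal.measurable_ofReal.comp hc.measurable
    have e1 : ∀ y, ENNReal.ofReal (utilde d w x ((2:ℝ)⁻¹ • (b1 + b2)) y) * K y
        = 2⁻¹ * (ENNReal.ofReal (utilde d u x b1 y) * K y
            + ENNReal.ofReal (utilde d v x b2 y) * K y) := by
      intro y
      rw [hut b1 b2 y, div_eq_inv_mul, ENNReal.ofReal_mul (by norm_num),
        ENNReal.ofReal_add (hnn u b1 h1 y) (hnn v b2 h2 y)]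
      rw [show ENNReal.ofReal (2:ℝ)⁻¹ = 2⁻¹ by
        rw [ENNReal.ofReal_inv_of_pos (by norm_num)]; norm_num]
      ring
    rw [kernelInt]
    simp only [e1]
    rw [lintegral_const_mul' _ _ (by norm_num), lintegral_add_left hmeas]
    rfl
  rw [MAop_eq d s u x hSu, MAop_eq d s v x hSv, MAop_eq d s w x hSw]
  set Su' : ℝ≥0∞ := ⨆ b ∈ subdiff d u x, ⨅ K ∈ admissibleKernel d s, kernelInt d u x b K
  set Sv' : ℝ≥0∞ := ⨆ b ∈ subdiff d v x, ⨅ K ∈ admissibleKernel d s, kernelInt d v x b K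
  set Sw' : ℝ≥0∞ := ⨆ b ∈ subdiff d w x, ⨅ K ∈ admissibleKernel d s, kernelInt d w x b K
  have key : Su' + Sv' ≤ 2 * Sw' := by
    apply ENNReal.biSup_add_biSup_le hSu hSv
    intro b1 h1 b2 h2
    have hhalf : 2⁻¹ * ((⨅ K ∈ admissibleKernel d s, kernelInt d u x b1 K)
        + ⨅ K ∈ admissibleKernel d s, kernelInt d v x b2 K)
        ≤ ⨅ K ∈ admissibleKernel d s, kernelInt d w x ((2:ℝ)⁻¹ • (b1 + b2)) K := by
      refine le_iInf₂ fun K hK => ?_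
      rw [hker b1 h1 b2 h2 K hK.1]
      gcongr
      · exact biInf_le _ hK
      · exact biInf_le _ hK
    have hmem := hmid b1 h1 b2 h2
    calc (⨅ K ∈ admissibleKernel d s, kernelInt d u x b1 K)
          + ⨅ K ∈ admissibleKernel d s, kernelInt d v x b2 K
        = 2 * (2⁻¹ * ((⨅ K ∈ admissibleKernel d s, kernelInt d u x b1 K)
            + ⨅ K ∈ admissibleKernel d s, kernelInt d v x b2 K)) := by
          rw [← mul_assoc, ENNReal.mul_inv_cancel (by norm_num) (by norm_num), one_mul]
      _ ≤ 2 * (⨅ K ∈ admissibleKernel d s, kernelInt d w x ((2:ℝ)⁻¹ • (b1 + b2)) K) := by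
          gcongr
      _ ≤ 2 * Sw' := by
          gcongr
          exact le_iSup₂_of_le _ hmem le_rfl
  -- final EReal computation
  have h2half : (((1 : ℝ) / 2 : ℝ) : EReal) = ((2⁻¹ : ℝ≥0∞) : EReal) := by
    rw [show (2⁻¹ : ℝ≥0∞) = ENNReal.ofReal (1/2 : ℝ) by
      rw [ENNReal.ofReal_div_of_pos (by norm_num)]; norm_num,
      EReal.coe_ennreal_ofReal]
    norm_num
  rw [h2half, ← EReal.coe_ennreal_add, ← EReal.coe_ennreal_mul,
    EReal.coe_ennreal_le_coe_ennreal_iff]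
  calc (Su' + Sv') * 2⁻¹ ≤ 2 * Sw' * 2⁻¹ := by gcongr
    _ = Sw' := by rw [mul_comm, ← mul_assoc, ENNReal.inv_mul_cancel (by norm_num) (by norm_num),
      one_mul]
end
end

section
/- Let u, v : ℝ^d → ℝ be continuous, let Ω ⊂ ℝ^d be open and bounded, and let f : ℝ^d → ℝ. Assume that for every x ∈ Ω one has MA u(x) ≥ f(x) + u(x) and MA v(x) ≤ f(x) + v(x) (inequalities in [-∞,+∞]), and that u(x) ≤ v(x) for all x ∈ ℝ^d \ Ω. Then u ≤ v on all of ℝ^d. -/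
open MeasureTheory Filter Metric Set
open scoped ENNReal NNReal Topology

noncomputable section

/-- Comparison principle: if `MA u - u ≥ f ≥ MA v - v` pointwise in a bounded open set `Ω`
and `u ≤ v` outside `Ω`, then `u ≤ v` everywhere. -/
theorem stmt14 (d : ℕ) (hd : 1 ≤ d) (s : ℝ) (hs : s ∈ Set.Ioo (1 : ℝ) 2)
    (u v f : Ed d → ℝ) (hu : Continuous u) (hv : Continuous v)
    (Ω : Set (Ed d)) (hΩo : IsOpen Ω) (hΩb : Bornology.IsBounded Ω)
    (hsub : ∀ x ∈ Ω, ((f x + u x : ℝ) : EReal) ≤ MAop d s u x)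
    (hsuper : ∀ x ∈ Ω, MAop d s v x ≤ ((f x + v x : ℝ) : EReal))
    (hbdry : ∀ x ∉ Ω, u x ≤ v x) :
    ∀ x, u x ≤ v x := by
  by_contra h
  push_neg at h
  obtain ⟨x₁, hx₁⟩ := h
  have hx₁Ω : x₁ ∈ Ω := by
    by_contra hc
    exact absurd (hbdry x₁ hc) (not_le.2 hx₁)
  have hw : Continuous (fun x => u x - v x) := hu.sub hv
  have hC : IsCompact (closure Ω) := hΩb.isCompact_closure
  obtain ⟨x₀, hx₀C, hx₀max⟩ := hC.exists_isMaxOn ⟨x₁, subset_closure hx₁Ω⟩ hw.continuousOn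
  have hM : 0 < u x₀ - v x₀ :=
    lt_of_lt_of_le (sub_pos.2 hx₁) (hx₀max (subset_closure hx₁Ω))
  have hx₀Ω : x₀ ∈ Ω := by
    by_contra hc
    have := hbdry x₀ hc
    linarith
  have hglob : ∀ z, u z - v z ≤ u x₀ - v x₀ := by
    intro z
    by_cases hz : z ∈ Ω
    · exact hx₀max (subset_closure hz)
    · have := hbdry z hz; linarith
  -- subdiff u x₀ is nonempty
  have hSne : subdiff d u x₀ ≠ ∅ := by
    intro hS
    have := hsub x₀ hx₀Ω
    rw [MAop, if_pos hS] at this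
    exact absurd this (not_le.2 (EReal.bot_lt_coe _))
  obtain ⟨b₀, hb₀⟩ := Set.nonempty_iff_ne_empty.2 hSne
  -- every subgradient of u at x₀ is a subgradient of v at x₀
  have hbv : ∀ b ∈ subdiff d u x₀, b ∈ subdiff d v x₀ := by
    intro b hb z
    have h1 := hb z
    have h2 := hglob z
    linarith
  have hSvne : subdiff d v x₀ ≠ ∅ :=
    Set.nonempty_iff_ne_empty.1 ⟨b₀, hbv b₀ hb₀⟩
  -- utilde comparison
  have hut : ∀ b y, utilde d u x₀ b y ≤ utilde d v x₀ b y := by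
    intro b y
    have := hglob (x₀ + y)
    simp only [utilde]
    linarith
  have hle : MAop d s u x₀ ≤ MAop d s v x₀ := by
    rw [MAop, MAop, if_neg hSne, if_neg hSvne]
    refine iSup₂_le fun b hb => ?_
    refine le_trans ?_ (le_iSup₂ (f := fun b _ =>
      ((⨅ K ∈ admissibleKernel d s, kernelInt d v x₀ b K : ℝ≥0∞) : EReal)) b (hbv b hb))
    have : (⨅ K ∈ admissibleKernel d s, kernelInt d u x₀ b K) ≤
        ⨅ K ∈ admissibleKernel d s, kernelInt d v x₀ b K := by
      refine iInf_mono fun K => iInf_mono fun hK => ?_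
      refine lintegral_mono fun y => mul_le_mul_left (ENNReal.ofReal_le_ofReal (hut b y)) _
    exact_mod_cast this
  have h1 := hsub x₀ hx₀Ω
  have h2 := hsuper x₀ hx₀Ω
  have : ((f x₀ + u x₀ : ℝ) : EReal) ≤ ((f x₀ + v x₀ : ℝ) : EReal) :=
    le_trans h1 (le_trans hle h2)
  have : f x₀ + u x₀ ≤ f x₀ + v x₀ := EReal.coe_le_coe_iff.1 this
  linarith
end
end
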